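/- arXiv:1503.00941 — 10 statements merged into one kernel-verified Lean document; each statement's English description precedes it below -/
import Mathlib

section
/- For every set N of n agents (n ≥ 1) with additive valuations v_1, …, v_n over a finite set M of indivisible goods, there exists a partition (S_1, …, S_n) of M into n pairwise disjoint bundles such that v_i(S_i) ≥ (1/2) · μ_i(n, M) for every agent i. -/
/-- `P` is a partition of the finite set `S` of goods into `n`
(possibly empty) pairwise disjoint bundles. -/
def IsPartition {ι : Type*} [DecidableEq ι] (n : ℕ) (S : Finset ι)
    (P : Fin n → Finset ι) : Prop :=
  (∀ i j : Fin n, i ≠ j → Disjoint (P i) (P j)) ∧ Finset.univ.biUnion P = S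

/-- The `n`-maximin share of an agent with additive valuation given by item
values `v` with respect to the finite set `S` of goods:
`μ(n, S) = max over partitions of S into n bundles of the minimum bundle value`. -/
noncomputable def mms {ι : Type*} [DecidableEq ι] (n : ℕ) (S : Finset ι)
    (v : ι → ℝ) : ℝ :=
  sSup {x : ℝ | ∃ P : Fin n → Finset ι,
    IsPartition n S P ∧ x = ⨅ j : Fin n, (P j).sum v}

section helpers
variable {ι : Type*} [DecidableEq ι]

lemma IsPartition.subset' {n : ℕ} {S : Finset ι} {P : Fin n → Finset ι}
    (h : IsPartition n S P) (i : Fin n) : P i ⊆ S :=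
  h.2 ▸ Finset.subset_biUnion_of_mem P (Finset.mem_univ i)

lemma mms_finite (n : ℕ) (S : Finset ι) (v : ι → ℝ) :
    {x : ℝ | ∃ P : Fin n → Finset ι,
      IsPartition n S P ∧ x = ⨅ j : Fin n, (P j).sum v}.Finite := by
  apply Set.Finite.subset (Set.Finite.image (fun P : Fin n → Finset ι => ⨅ j, (P j).sum v)
    (Set.Finite.pi (fun _ : Fin n => S.powerset.finite_toSet)))
  rintro x ⟨P, hP, rfl⟩
  exact ⟨P, by simp [Set.mem_pi, Finset.mem_powerset, fun i => hP.subset' i], rfl⟩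

lemma isPartition_trivial {n : ℕ} (hn : 0 < n) (S : Finset ι) :
    IsPartition n S (fun i => if i = (⟨0, hn⟩ : Fin n) then S else ∅) := by
  constructor
  · intro i j hij
    by_cases hi : i = ⟨0, hn⟩ <;> by_cases hj : j = ⟨0, hn⟩ <;>
      simp_all [Finset.disjoint_left]
  · ext x
    simp only [Finset.mem_biUnion, Finset.mem_univ, true_and]
    constructor
    · rintro ⟨i, hi⟩; split at hi <;> simp_all
    · intro hx; exact ⟨⟨0, hn⟩, by simp [hx]⟩

lemma mms_mem {n : ℕ} (hn : 0 < n) (S : Finset ι) (v : ι → ℝ) :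
    ∃ P : Fin n → Finset ι, IsPartition n S P ∧
      mms n S v = ⨅ j : Fin n, (P j).sum v := by
  have hne : {x : ℝ | ∃ P : Fin n → Finset ι,
      IsPartition n S P ∧ x = ⨅ j : Fin n, (P j).sum v}.Nonempty :=
    ⟨_, _, isPartition_trivial hn S, rfl⟩
  exact hne.csSup_mem (mms_finite n S v)

lemma le_mms {n : ℕ} {S : Finset ι} {v : ι → ℝ} {P : Fin n → Finset ι}
    (h : IsPartition n S P) : (⨅ j : Fin n, (P j).sum v) ≤ mms n S v :=
  le_csSup (mms_finite n S v).bddAbove ⟨P, h, rfl⟩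

lemma mms_nonneg {n : ℕ} (hn : 0 < n) {S : Finset ι} {v : ι → ℝ}
    (hv : ∀ j ∈ S, 0 ≤ v j) : 0 ≤ mms n S v := by
  obtain ⟨P, hP, hval⟩ := mms_mem hn S v
  rw [hval]
  have : Nonempty (Fin n) := ⟨⟨0, hn⟩⟩
  exact le_ciInf fun i => Finset.sum_nonneg fun j hj => hv j (hP.subset' i hj)

lemma mms_le_sum {n : ℕ} (hn : 0 < n) {S : Finset ι} {v : ι → ℝ}
    (hv : ∀ j ∈ S, 0 ≤ v j) : mms n S v ≤ S.sum v := by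
  obtain ⟨P, hP, hval⟩ := mms_mem hn S v
  rw [hval]
  calc (⨅ j : Fin n, (P j).sum v) ≤ (P ⟨0, hn⟩).sum v :=
        ciInf_le (Finite.bddBelow_range _) _
    _ ≤ S.sum v := Finset.sum_le_sum_of_subset_of_nonneg (hP.subset' _)
        (fun j hj _ => hv j hj)

lemma sum_partition {n : ℕ} {S : Finset ι} {v : ι → ℝ} {P : Fin n → Finset ι}
    (h : IsPartition n S P) : S.sum v = ∑ i : Fin n, (P i).sum v := by
  rw [← h.2]
  exact Finset.sum_biUnion (fun i _ j _ hij => h.1 i j hij)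

lemma mul_mms_le {n : ℕ} (hn : 0 < n) {S : Finset ι} {v : ι → ℝ} :
    (n : ℝ) * mms n S v ≤ S.sum v := by
  obtain ⟨P, hP, hval⟩ := mms_mem hn S v
  have : Nonempty (Fin n) := ⟨⟨0, hn⟩⟩
  calc (n : ℝ) * mms n S v = ∑ _i : Fin n, mms n S v := by
        rw [Finset.sum_const, Finset.card_univ, Fintype.card_fin, nsmul_eq_mul]
    _ ≤ ∑ i : Fin n, (P i).sum v := Finset.sum_le_sum fun i _ => by
        rw [hval]; exact ciInf_le (Finite.bddBelow_range _) _
    _ = S.sum v := (sum_partition hP).symm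

end helpers

section main
variable {ι : Type*} [DecidableEq ι]

/-- Removing one agent and one item does not decrease the maximin share. -/
lemma mms_le_erase {r : ℕ} (hr : 0 < r) {S : Finset ι} {v : ι → ℝ}
    (hv : ∀ x ∈ S, 0 ≤ v x) {j : ι} (hj : j ∈ S) :
    mms (r + 1) S v ≤ mms r (S.erase j) v := by
  classical
  obtain ⟨P, hP, hval⟩ := mms_mem (Nat.succ_pos r) S v
  have : Nonempty (Fin (r+1)) := ⟨0⟩
  have hrne : Nonempty (Fin r) := ⟨⟨0, hr⟩⟩
  -- j belongs to some bundle
  have hjk : ∃ k : Fin (r+1), j ∈ P k := by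
    have := hP.2 ▸ hj
    simpa using Finset.mem_biUnion.mp this
  obtain ⟨k, hjPk⟩ := hjk
  set z : Fin r := ⟨0, hr⟩ with hz
  set Q : Fin r → Finset ι :=
    fun i => if i = z then P (k.succAbove i) ∪ (P k).erase j else P (k.succAbove i) with hQ
  have hPQsub : ∀ i, P (k.succAbove i) ⊆ Q i := by
    intro i; by_cases h : i = z <;> simp [hQ, h, Finset.subset_union_left]
  have hdisj : ∀ i i' : Fin r, i ≠ i' → Disjoint (Q i) (Q i') := by
    intro i i' hii'
    have hne : k.succAbove i ≠ k.succAbove i' := fun h => hii' (Fin.succAbove_right_injective h)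
    have h1 : Disjoint (P (k.succAbove i)) (P (k.succAbove i')) := hP.1 _ _ hne
    have h2 : ∀ m : Fin r, Disjoint ((P k).erase j) (P (k.succAbove m)) :=
      fun m => Finset.disjoint_of_subset_left (Finset.erase_subset _ _)
        (hP.1 _ _ (Fin.succAbove_ne k m).symm)
    by_cases hi : i = z <;> by_cases hi' : i' = z
    · exact absurd (hi.trans hi'.symm) hii'
    · subst hi
      simp only [hQ, if_pos rfl, if_neg hi']
      exact Finset.disjoint_union_left.mpr ⟨h1, h2 i'⟩
    · subst hi'
      simp only [hQ, if_neg hi, if_pos rfl]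
      exact Finset.disjoint_union_right.mpr ⟨h1, (h2 i).symm⟩
    · simpa [hQ, hi, hi'] using h1
  have hmemQ : ∀ x, (∃ i, x ∈ Q i) ↔ (∃ i, x ∈ P (k.succAbove i)) ∨ x ∈ (P k).erase j := by
    intro x
    constructor
    · rintro ⟨i, hx⟩
      by_cases h : i = z
      · subst h
        have hQz : Q z = P (k.succAbove z) ∪ (P k).erase j := by simp [hQ]
        rw [hQz] at hx
        rcases Finset.mem_union.mp hx with h' | h'
        · exact Or.inl ⟨z, h'⟩
        · exact Or.inr h'
      · exact Or.inl ⟨i, by simpa [hQ, h] using hx⟩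
    · rintro (⟨i, hx⟩ | hx)
      · exact ⟨i, hPQsub i hx⟩
      · exact ⟨z, by simp [hQ, Finset.mem_union, hx]⟩
  have hunion : Finset.univ.biUnion Q = S.erase j := by
    ext x
    simp only [Finset.mem_biUnion, Finset.mem_univ, true_and, Finset.mem_erase]
    rw [hmemQ]
    constructor
    · rintro (⟨i, hx⟩ | hx)
      · have hik : k.succAbove i ≠ k := Fin.succAbove_ne k i
        have hxj : x ≠ j := by
          intro h; subst h
          exact (Finset.disjoint_left.mp (hP.1 _ _ hik) hx) hjPk
        exact ⟨hxj, hP.subset' _ hx⟩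
      · rcases Finset.mem_erase.mp hx with ⟨hxj, hxk⟩
        exact ⟨hxj, hP.subset' k hxk⟩
    · rintro ⟨hxj, hxS⟩
      have : ∃ i', x ∈ P i' := by
        have := hP.2 ▸ hxS
        simpa using Finset.mem_biUnion.mp this
      obtain ⟨i', hxi'⟩ := this
      by_cases hik : i' = k
      · exact Or.inr (Finset.mem_erase.mpr ⟨hxj, hik ▸ hxi'⟩)
      · obtain ⟨i, rfl⟩ := Fin.exists_succAbove_eq hik
        exact Or.inl ⟨i, hxi'⟩
  have hQpart : IsPartition r (S.erase j) Q := ⟨hdisj, hunion⟩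
  have hlow : ∀ i : Fin r, mms (r+1) S v ≤ (Q i).sum v := by
    intro i
    have h1 : mms (r+1) S v ≤ (P (k.succAbove i)).sum v := by
      rw [hval]; exact ciInf_le (Finite.bddBelow_range _) _
    refine h1.trans (Finset.sum_le_sum_of_subset_of_nonneg (hPQsub i) ?_)
    intro x hx _
    exact hv x (Finset.mem_of_mem_erase (hQpart.subset' i hx))
  exact (le_ciInf hlow).trans (le_mms hQpart)

/-- Glue a bundle for agent `k` onto a partition of the rest. -/
lemma glue {n : ℕ} {A : Finset (Fin n)} {R T : Finset ι} {k : Fin n}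
    (hk : k ∈ A) (hT : T ⊆ R) {P : Fin n → Finset ι}
    (hpart : IsPartition n (R \ T) P) (hout : ∀ i ∉ A.erase k, P i = ∅) :
    IsPartition n R (Function.update P k T) ∧
      (∀ i ∉ A, Function.update P k T i = ∅) := by
  classical
  have hPk : P k = ∅ := hout k (by simp)
  refine ⟨⟨?_, ?_⟩, ?_⟩
  · intro i j hij
    have hd : ∀ m : Fin n, Disjoint T (P m) :=
      fun m => Finset.disjoint_of_subset_right (hpart.subset' m)
        (by simpa using Finset.sdiff_disjoint.symm)
    by_cases hi : i = k <;> by_cases hj : j = k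
    · exact absurd (hi.trans hj.symm) hij
    · subst hi; simpa [Function.update_of_ne hj] using hd j
    · subst hj; simpa [Function.update_of_ne hi] using (hd i).symm
    · simpa [Function.update_of_ne hi, Function.update_of_ne hj] using hpart.1 i j hij
  · ext x
    simp only [Finset.mem_biUnion, Finset.mem_univ, true_and]
    constructor
    · rintro ⟨i, hx⟩
      by_cases hi : i = k
      · subst hi; rw [Function.update_self] at hx; exact hT hx
      · rw [Function.update_of_ne hi] at hx
        exact (Finset.mem_sdiff.mp (hpart.subset' i hx)).1
    · intro hx
      by_cases hxT : x ∈ T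
      · exact ⟨k, by simp [hxT]⟩
      · have : x ∈ R \ T := Finset.mem_sdiff.mpr ⟨hx, hxT⟩
        rw [← hpart.2] at this
        obtain ⟨i, _, hi⟩ := Finset.mem_biUnion.mp this
        have hik : i ≠ k := by rintro rfl; simp [hPk] at hi
        exact ⟨i, by rwa [Function.update_of_ne hik]⟩
  · intro i hi
    have hik : i ≠ k := by rintro rfl; exact hi hk
    rw [Function.update_of_ne hik]
    exact hout i (fun h => hi (Finset.mem_of_mem_erase h))

/-- Bag filling: when all items are small, everyone in `A` can get her threshold. -/
lemma bagfill {n : ℕ} (v : Fin n → ι → ℝ) (M : Finset ι)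
    (hv : ∀ i : Fin n, ∀ j ∈ M, 0 ≤ v i j) (τ : Fin n → ℝ) (hτ : ∀ i, 0 ≤ τ i) :
    ∀ r : ℕ, 0 < r → ∀ A : Finset (Fin n), A.card = r → ∀ R ⊆ M,
    (∀ k ∈ A, ∀ j ∈ R, v k j < τ k) →
    (∀ k ∈ A, 2 * r * τ k ≤ R.sum (v k)) →
    ∃ P : Fin n → Finset ι, IsPartition n R P ∧ (∀ i ∉ A, P i = ∅) ∧
      ∀ k ∈ A, τ k ≤ (P k).sum (v k) := by
  classical
  intro r
  induction r with
  | zero => exact fun h => absurd h (lt_irrefl 0)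
  | succ s ih =>
    intro _ A hA R hR hsmall hbig
    rcases Nat.eq_zero_or_pos s with hs | hs
    · -- base case : one agent, give everything
      subst hs
      obtain ⟨k, rfl⟩ := Finset.card_eq_one.mp hA
      refine ⟨fun i => if i = k then R else ∅, ?_, ?_, ?_⟩
      · constructor
        · intro i j hij
          by_cases hi : i = k <;> by_cases hj : j = k <;> simp_all [Finset.disjoint_left]
        · ext x
          simp only [Finset.mem_biUnion, Finset.mem_univ, true_and]
          constructor
          · rintro ⟨i, hi⟩; split at hi <;> simp_all
          · intro hx; exact ⟨k, by simp [hx]⟩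
      · intro i hi; simp only [Finset.mem_singleton] at hi; simp [hi]
      · intro m hm; simp only [Finset.mem_singleton] at hm; subst hm
        have := hbig m (by simp)
        have h2 : τ m ≤ 2 * (1:ℕ) * τ m := by
          have := hτ m; push_cast; nlinarith
        simp only [if_pos rfl]
        exact h2.trans (by simpa using hbig m (by simp))
    · -- inductive step : find a minimal satisfying bag
      have hAne : A.Nonempty := Finset.card_pos.mp (hA ▸ Nat.succ_pos s)
      set F : Finset (Finset ι) :=
        R.powerset.filter (fun S => ∃ k ∈ A, τ k ≤ S.sum (v k)) with hF
      have hRF : R ∈ F := by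
        obtain ⟨k, hk⟩ := hAne
        refine Finset.mem_filter.mpr ⟨Finset.mem_powerset.mpr (Finset.Subset.refl R), k, hk, ?_⟩
        have h1 := hbig k hk
        have h2 := hτ k
        have h3 : (1:ℝ) ≤ ((s+1 : ℕ) : ℝ) := by exact_mod_cast Nat.succ_le_succ (Nat.zero_le s)
        nlinarith [mul_nonneg h2 (by linarith : (0:ℝ) ≤ 2*((s+1:ℕ):ℝ)-1)]
      obtain ⟨S, hSF, hSmin⟩ := F.exists_min_image Finset.card ⟨R, hRF⟩
      have hSf := Finset.mem_filter.mp hSF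
      have hSR : S ⊆ R := Finset.mem_powerset.mp hSf.1
      obtain ⟨k, hkA, hkS⟩ := hSf.2
      -- other agents value S at most 2 τ
      have hSval : ∀ m ∈ A, (S.sum (v m)) ≤ 2 * τ m := by
        intro m hm
        rcases S.eq_empty_or_nonempty with rfl | ⟨j, hjS⟩
        · simpa using by nlinarith [hτ m]
        · have hje : S.erase j ∉ F := by
            intro hmem
            have := hSmin _ hmem
            have := Finset.card_erase_lt_of_mem hjS
            omega
          have hse : ∀ m' ∈ A, (S.erase j).sum (v m') < τ m' := by
            intro m' hm'
            by_contra hcon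
            push_neg at hcon
            exact hje (Finset.mem_filter.mpr ⟨Finset.mem_powerset.mpr
              ((Finset.erase_subset _ _).trans hSR), m', hm', hcon⟩)
          have hsum : (S.erase j).sum (v m) + v m j = S.sum (v m) :=
            Finset.sum_erase_add _ _ hjS
          have h1 := hse m hm
          have h2 := hsmall m hm j (hSR hjS)
          linarith
      -- recurse on A.erase k, R \ S
      have hcard : (A.erase k).card = s := by
        rw [Finset.card_erase_of_mem hkA, hA]
        omega
      have hRS : R \ S ⊆ M := (Finset.sdiff_subset).trans hR
      have hbig' : ∀ m ∈ A.erase k, 2 * s * τ m ≤ (R \ S).sum (v m) := by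
        intro m hm
        have hmA := Finset.mem_of_mem_erase hm
        have hsplit : (R \ S).sum (v m) + S.sum (v m) = R.sum (v m) :=
          Finset.sum_sdiff hSR
        have h1 := hbig m hmA
        have h2 := hSval m hmA
        have := hτ m
        push_cast at h1 ⊢
        nlinarith
      obtain ⟨P, hPpart, hPout, hPval⟩ := ih hs (A.erase k) hcard (R \ S) hRS
        (fun m hm j hj => hsmall m (Finset.mem_of_mem_erase hm) j (Finset.mem_sdiff.mp hj).1)
        hbig'
      obtain ⟨hglue1, hglue2⟩ := glue hkA hSR hPpart hPout
      refine ⟨Function.update P k S, hglue1, hglue2, ?_⟩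
      intro m hm
      by_cases hmk : m = k
      · subst hmk; simpa using hkS
      · rw [Function.update_of_ne hmk]
        exact hPval m (Finset.mem_erase.mpr ⟨hmk, hm⟩)

/-- Main generalized lemma: if each agent's `2τ` is below the maximin share
of the current subproblem, everyone can receive at least `τ`. -/
lemma half_general {n : ℕ} (v : Fin n → ι → ℝ) (M : Finset ι)
    (hv : ∀ i : Fin n, ∀ j ∈ M, 0 ≤ v i j) (τ : Fin n → ℝ) (hτ : ∀ i, 0 ≤ τ i) :
    ∀ r : ℕ, 0 < r → ∀ A : Finset (Fin n), A.card = r → ∀ R ⊆ M,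
    (∀ k ∈ A, 2 * τ k ≤ mms r R (v k)) →
    ∃ P : Fin n → Finset ι, IsPartition n R P ∧ (∀ i ∉ A, P i = ∅) ∧
      ∀ k ∈ A, τ k ≤ (P k).sum (v k) := by
  classical
  intro r
  induction r with
  | zero => exact fun h => absurd h (lt_irrefl 0)
  | succ s ih =>
    intro _ A hA R hR hmms
    have hvR : ∀ k : Fin n, ∀ j ∈ R, 0 ≤ v k j := fun k j hj => hv k j (hR hj)
    rcases Nat.eq_zero_or_pos s with hs | hs
    · -- single agent: give everything
      subst hs
      obtain ⟨k, rfl⟩ := Finset.card_eq_one.mp hA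
      refine ⟨fun i => if i = k then R else ∅, ?_, ?_, ?_⟩
      · constructor
        · intro i j hij
          by_cases hi : i = k <;> by_cases hj : j = k <;> simp_all [Finset.disjoint_left]
        · ext x
          simp only [Finset.mem_biUnion, Finset.mem_univ, true_and]
          constructor
          · rintro ⟨i, hi⟩; split at hi <;> simp_all
          · intro hx; exact ⟨k, by simp [hx]⟩
      · intro i hi; simp only [Finset.mem_singleton] at hi; simp [hi]
      · intro m hm; simp only [Finset.mem_singleton] at hm; subst hm
        have h1 := hmms m (by simp)
        have h2 := mms_le_sum Nat.one_pos (v := v m) (fun j hj => hvR m j hj)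
        have h3 := hτ m
        norm_num at h1
        show τ m ≤ (if m = m then R else ∅).sum (v m)
        rw [if_pos rfl]
        linarith
    · by_cases hbig : ∃ j ∈ R, ∃ k ∈ A, τ k ≤ v k j
      · -- give a single large item to agent k, recurse
        obtain ⟨j, hjR, k, hkA, hkj⟩ := hbig
        have hcard : (A.erase k).card = s := by
          rw [Finset.card_erase_of_mem hkA, hA]; omega
        have hmono : ∀ m ∈ A.erase k,
            2 * τ m ≤ mms s (R.erase j) (v m) := by
          intro m hm
          exact (hmms m (Finset.mem_of_mem_erase hm)).trans
            (mms_le_erase hs (fun x hx => hvR m x hx) hjR)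
        obtain ⟨P, hPpart, hPout, hPval⟩ := ih hs (A.erase k) hcard (R.erase j)
          ((Finset.erase_subset _ _).trans hR) hmono
        have hjsub : {j} ⊆ R := Finset.singleton_subset_iff.mpr hjR
        have hsd : R \ {j} = R.erase j := by
          simp [Finset.sdiff_singleton_eq_erase]
        rw [← hsd] at hPpart
        obtain ⟨hglue1, hglue2⟩ := glue hkA hjsub hPpart hPout
        refine ⟨Function.update P k {j}, hglue1, hglue2, ?_⟩
        intro m hm
        by_cases hmk : m = k
        · subst hmk; simpa using hkj
        · rw [Function.update_of_ne hmk]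
          exact hPval m (Finset.mem_erase.mpr ⟨hmk, hm⟩)
      · -- all items are small: bag filling
        push_neg at hbig
        apply bagfill v M hv τ hτ (s+1) (Nat.succ_pos s) A hA R hR
          (fun k hk j hj => hbig j hj k hk)
        intro k hk
        have h1 := hmms k hk
        have h2 := mul_mms_le (Nat.succ_pos s) (S := R) (v := v k)
        have h3 : (0:ℝ) < ((s+1 : ℕ) : ℝ) := by positivity
        nlinarith [mul_le_mul_of_nonneg_left h1 (le_of_lt h3)]

end main

/-- for any `n ≥ 1` agents with additive (nonnegative) valuations over a
finite set `M` of goods, there is a partition of `M` giving every agent at least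
half of her maximin share. -/
theorem exists_half_mms_allocation {ι : Type*} [DecidableEq ι]
    (n : ℕ) (hn : 1 ≤ n) (M : Finset ι)
    (v : Fin n → ι → ℝ) (hv : ∀ i : Fin n, ∀ j ∈ M, 0 ≤ v i j) :
    ∃ S : Fin n → Finset ι, IsPartition n M S ∧
      ∀ i : Fin n, (1 / 2) * mms n M (v i) ≤ (S i).sum (v i) := by
  classical
  set τ : Fin n → ℝ := fun i => mms n M (v i) / 2 with hτdef
  have hτ : ∀ i, 0 ≤ τ i := fun i => by
    have := mms_nonneg hn (hv i); simp only [hτdef]; linarith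
  obtain ⟨P, hPpart, _, hPval⟩ := half_general v M hv τ hτ n hn Finset.univ
    (by simp) M (Finset.Subset.refl M)
    (fun k _ => by simp only [hτdef]; linarith [le_refl (mms n M (v k))])
  refine ⟨P, hPpart, fun i => ?_⟩
  have := hPval i (Finset.mem_univ i)
  simp only [hτdef] at this
  linarith
end

section
/- For every set N of n agents (n ≥ 1) with additive valuations over a finite set M of indivisible goods, there exists a partition (S_1, …, S_n) of M into n pairwise disjoint bundles such that for every agent i, v_i(S_i) ≥ (Σ_{j∈M} v_{ij})/n − v_max, and consequently v_i(S_i) ≥ μ_i(n, M) − v_max, where v_max = max_{i∈N, j∈M} v_{ij}. Such a partition is produced by the Greedy Round-Robin algorithm. -/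
open Classical in
/-- One full run of the Greedy Round-Robin algorithm, starting from the set `R` of
currently unallocated items, with the agent `t % n` to move (agents move in the
cyclic order `0, 1, …, n−1, 0, 1, …`), and current bundles `A`.  On her turn, the
current agent adds to her bundle a most valuable (according to her own valuation,
ties broken by smallest item) unallocated item, until all items are allocated. -/
noncomputable def greedyAux {ι : Type*} [LinearOrder ι] (n : ℕ) (hn : 0 < n)
    (v : Fin n → ι → ℝ) (R : Finset ι) (t : ℕ) (A : Fin n → Finset ι) :
    Fin n → Finset ι :=
  if h : R.Nonempty then
    let i : Fin n := ⟨t % n, Nat.mod_lt t hn⟩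
    have hne : (R.filter fun j => ∀ k ∈ R, v i k ≤ v i j).Nonempty := by
      obtain ⟨j, hj, hmax⟩ := R.exists_max_image (v i) h
      exact ⟨j, Finset.mem_filter.mpr ⟨hj, hmax⟩⟩
    let j : ι := (R.filter fun j => ∀ k ∈ R, v i k ≤ v i j).min' hne
    greedyAux n hn v (R.erase j) (t + 1) (Function.update A i (insert j (A i)))
  else A
termination_by R.card
decreasing_by
  exact Finset.card_erase_lt_of_mem (Finset.mem_of_mem_filter _ (Finset.min'_mem _ hne))

/-- The bundles produced by the Greedy Round-Robin algorithm on the set `M` of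
items, for `n` agents with additive valuations given by the item values `v`. -/
noncomputable def greedyRoundRobin {ι : Type*} [LinearOrder ι] (n : ℕ) (hn : 0 < n)
    (v : Fin n → ι → ℝ) (M : Finset ι) : Fin n → Finset ι :=
  greedyAux n hn v M 0 fun _ => ∅

lemma dist_eq {n i a : ℕ} (hi : i < n) (ha : a < n) :
    (i + n - a) % n = if a ≤ i then i - a else i + n - a := by
  split
  · next h =>
    have : i + n - a = (i - a) + n := by omega
    rw [this, Nat.add_mod_right, Nat.mod_eq_of_lt (by omega)]
  · exact Nat.mod_eq_of_lt (by omega)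

lemma greedyAux_partition {ι : Type*} [LinearOrder ι] (n : ℕ) (hn : 0 < n)
    (v : Fin n → ι → ℝ) :
    ∀ (N : ℕ) (R : Finset ι), R.card ≤ N → ∀ (t : ℕ) (A : Fin n → Finset ι),
      (∀ i j : Fin n, i ≠ j → Disjoint (A i) (A j)) →
      (∀ i : Fin n, Disjoint R (A i)) →
      (∀ i j : Fin n, i ≠ j →
        Disjoint (greedyAux n hn v R t A i) (greedyAux n hn v R t A j)) ∧
      Finset.univ.biUnion (greedyAux n hn v R t A) = R ∪ Finset.univ.biUnion A := by
  intro N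
  induction N with
  | zero =>
    intro R hR t A hd hRA
    have hRe : R = ∅ := Finset.card_eq_zero.mp (Nat.le_zero.mp hR)
    subst hRe
    rw [greedyAux, dif_neg (by simp)]
    exact ⟨fun i j h => hd i j h, by simp⟩
  | succ N ih =>
    intro R hR t A hd hRA
    by_cases h : R.Nonempty
    · rw [greedyAux, dif_pos h]
      set a : Fin n := ⟨t % n, Nat.mod_lt t hn⟩ with ha
      set j : ι := ((R.filter fun j => ∀ k ∈ R, v a k ≤ v a j).min' (by
        obtain ⟨j, hj, hmax⟩ := R.exists_max_image (v a) h
        exact ⟨j, Finset.mem_filter.mpr ⟨hj, hmax⟩⟩)) with hj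
      have hjR : j ∈ R :=
        Finset.mem_of_mem_filter _ (Finset.min'_mem _ _)
      have hcard : (R.erase j).card ≤ N := by
        have := Finset.card_erase_lt_of_mem hjR
        omega
      set A' := Function.update A a (insert j (A a)) with hA'
      have hd' : ∀ i k : Fin n, i ≠ k → Disjoint (A' i) (A' k) := by
        intro i k hik
        have hjnot : ∀ i : Fin n, i ≠ a → A' i = A i := by
          intro i hia; simp [hA', Function.update_of_ne hia]
        by_cases hia : i = a
        · subst hia
          rw [hjnot k (Ne.symm hik)]
          simp only [hA', Function.update_self]
          rw [Finset.disjoint_insert_left]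
          exact ⟨fun hjk => (Finset.disjoint_left.mp (hRA k)) hjR hjk, hd a k hik⟩
        · by_cases hka : k = a
          · subst hka
            rw [hjnot i hia]
            simp only [hA', Function.update_self]
            rw [Finset.disjoint_insert_right]
            exact ⟨fun hji => (Finset.disjoint_left.mp (hRA i)) hjR hji, hd i a hik⟩
          · rw [hjnot i hia, hjnot k hka]; exact hd i k hik
      have hRA' : ∀ i : Fin n, Disjoint (R.erase j) (A' i) := by
        intro i
        by_cases hia : i = a
        · subst hia
          simp only [hA', Function.update_self]
          rw [Finset.disjoint_insert_right]
          refine ⟨Finset.notMem_erase _ _, ?_⟩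
          exact Finset.disjoint_of_subset_left (Finset.erase_subset _ _) (hRA a)
        · simp only [hA', Function.update_of_ne hia]
          exact Finset.disjoint_of_subset_left (Finset.erase_subset _ _) (hRA i)
      obtain ⟨hd2, hcov2⟩ := ih (R.erase j) hcard (t + 1) A' hd' hRA'
      refine ⟨hd2, ?_⟩
      rw [hcov2]
      have : Finset.univ.biUnion A' = insert j (Finset.univ.biUnion A) := by
        ext x
        simp only [Finset.mem_biUnion, Finset.mem_univ, true_and, Finset.mem_insert]
        constructor
        · rintro ⟨i, hi⟩
          by_cases hia : i = a
          · subst hia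
            simp only [hA', Function.update_self, Finset.mem_insert] at hi
            rcases hi with h1 | h1
            · exact Or.inl h1
            · exact Or.inr ⟨a, h1⟩
          · simp only [hA', Function.update_of_ne hia] at hi
            exact Or.inr ⟨i, hi⟩
        · rintro (rfl | ⟨i, hi⟩)
          · exact ⟨a, by simp [hA']⟩
          · by_cases hia : i = a
            · subst hia; exact ⟨a, by simp [hA', hi]⟩
            · exact ⟨i, by simp [hA', Function.update_of_ne hia, hi]⟩
      rw [this]
      ext x
      simp only [Finset.mem_union, Finset.mem_erase, Finset.mem_insert]
      constructor
      · rintro (⟨_, hx⟩ | (rfl | hx))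
        · exact Or.inl hx
        · exact Or.inl hjR
        · exact Or.inr hx
      · rintro (hx | hx)
        · by_cases hxj : x = j
          · exact Or.inr (Or.inl hxj)
          · exact Or.inl ⟨hxj, hx⟩
        · exact Or.inr (Or.inr hx)
    · rw [greedyAux, dif_neg h]
      refine ⟨hd, ?_⟩
      rw [Finset.not_nonempty_iff_eq_empty.mp h]
      simp

lemma greedyAux_step {ι : Type*} [LinearOrder ι] (n : ℕ) (hn : 0 < n)
    (v : Fin n → ι → ℝ) (R : Finset ι) (t : ℕ) (A : Fin n → Finset ι)
    (h : R.Nonempty)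
    (hne : (R.filter fun j => ∀ k ∈ R,
        v (⟨t % n, Nat.mod_lt t hn⟩ : Fin n) k ≤ v ⟨t % n, Nat.mod_lt t hn⟩ j).Nonempty) :
    greedyAux n hn v R t A =
      greedyAux n hn v
        (R.erase ((R.filter fun j => ∀ k ∈ R,
            v (⟨t % n, Nat.mod_lt t hn⟩ : Fin n) k ≤ v ⟨t % n, Nat.mod_lt t hn⟩ j).min' hne))
        (t + 1)
        (Function.update A ⟨t % n, Nat.mod_lt t hn⟩
          (insert ((R.filter fun j => ∀ k ∈ R,
              v (⟨t % n, Nat.mod_lt t hn⟩ : Fin n) k ≤ v ⟨t % n, Nat.mod_lt t hn⟩ j).min' hne)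
            (A ⟨t % n, Nat.mod_lt t hn⟩))) := by
  rw [greedyAux, dif_pos h]

lemma greedyAux_value {ι : Type*} [LinearOrder ι] (n : ℕ) (hn : 0 < n)
    (v : Fin n → ι → ℝ) (i : Fin n) :
    ∀ (N : ℕ) (R : Finset ι), R.card ≤ N → ∀ (t : ℕ) (A : Fin n → Finset ι) (m : ℝ),
      0 ≤ m → (∀ k ∈ R, 0 ≤ v i k) → (∀ k ∈ R, v i k ≤ m) → Disjoint R (A i) →
      (n : ℝ) * (A i).sum (v i) + R.sum (v i)
          - (((i.val + n - t % n) % n : ℕ) : ℝ) * m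
        ≤ (n : ℝ) * ((greedyAux n hn v R t A) i).sum (v i) := by
  intro N
  induction N with
  | zero =>
    intro R hR t A m hm hnn hub hdisj
    have hRe : R = ∅ := Finset.card_eq_zero.mp (Nat.le_zero.mp hR)
    subst hRe
    rw [greedyAux, dif_neg (by simp)]
    simp only [Finset.sum_empty, add_zero]
    have : (0 : ℝ) ≤ (((i.val + n - t % n) % n : ℕ) : ℝ) * m :=
      mul_nonneg (Nat.cast_nonneg _) hm
    linarith
  | succ N ih =>
    intro R hR t A m hm hnn hub hdisj
    by_cases h : R.Nonempty
    · have hne' : (R.filter fun j => ∀ k ∈ R,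
          v (⟨t % n, Nat.mod_lt t hn⟩ : Fin n) k ≤ v ⟨t % n, Nat.mod_lt t hn⟩ j).Nonempty := by
        obtain ⟨j, hj, hmax⟩ := R.exists_max_image (v ⟨t % n, Nat.mod_lt t hn⟩) h
        exact ⟨j, Finset.mem_filter.mpr ⟨hj, hmax⟩⟩
      rw [greedyAux_step n hn v R t A h hne']
      set a : Fin n := (⟨t % n, Nat.mod_lt t hn⟩ : Fin n) with ha
      set j : ι := ((R.filter fun j => ∀ k ∈ R, v a k ≤ v a j).min' hne') with hj
      have hjmem := Finset.mem_filter.mp (Finset.min'_mem _ hne')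
      have hjR : j ∈ R := hjmem.1
      have hjmax : ∀ k ∈ R, v a k ≤ v a j := hjmem.2
      have hcard : (R.erase j).card ≤ N := by
        have := Finset.card_erase_lt_of_mem hjR
        omega
      have hsum_erase : (R.erase j).sum (v i) = R.sum (v i) - v i j :=
        Finset.sum_erase_eq_sub hjR
      have htn : t % n < n := Nat.mod_lt t hn
      have hstep : (t + 1) % n = if t % n + 1 = n then 0 else t % n + 1 := by
        rcases Nat.lt_or_ge 1 n with h1 | h1
        · rw [Nat.add_mod, Nat.mod_eq_of_lt h1]
          split
          · next he => rw [he, Nat.mod_self]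
          · next he => exact Nat.mod_eq_of_lt (by omega)
        · have hne1 : n = 1 := by omega
          subst hne1
          simp [Nat.mod_one]
      have hin : i.val < n := i.isLt
      have hdist := dist_eq (a := t % n) hin htn
      by_cases hai : t % n = i.val
      · -- it's agent i's turn
        have haieq : a = i := Fin.ext hai
        have hd0 : (i.val + n - t % n) % n = 0 := by
          rw [hdist]; split <;> omega
        have hd1 : (i.val + n - (t + 1) % n) % n = n - 1 := by
          rw [hstep]
          split
          · next he => rw [dist_eq hin hn]; split <;> omega
          · next he => rw [dist_eq hin (by omega)]; split <;> omega
        have hjA : j ∉ A i := Finset.disjoint_left.mp hdisj hjR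
        have hupd : Function.update A a (insert j (A a)) i = insert j (A i) := by
          rw [haieq, Function.update_self]
        have hsum_ins : (insert j (A i)).sum (v i) = v i j + (A i).sum (v i) :=
          Finset.sum_insert hjA
        have hvj0 : 0 ≤ v i j := hnn j hjR
        have hIH := ih (R.erase j) hcard (t + 1)
          (Function.update A a (insert j (A a))) (v i j) hvj0
          (fun k hk => hnn k (Finset.mem_of_mem_erase hk))
          (fun k hk => by
            have := hjmax k (Finset.mem_of_mem_erase hk)
            rwa [haieq] at this)
          (by
            rw [hupd, Finset.disjoint_insert_right]
            exact ⟨Finset.notMem_erase _ _,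
              Finset.disjoint_of_subset_left (Finset.erase_subset _ _) hdisj⟩)
        rw [hupd, hsum_ins, hsum_erase, hd1] at hIH
        rw [hd0]
        have hcast : ((n - 1 : ℕ) : ℝ) = (n : ℝ) - 1 := by
          push_cast [Nat.cast_sub hn]
          ring
        rw [hcast] at hIH
        push_cast at hIH ⊢
        nlinarith [hIH]
      · -- someone else's turn
        have haine : i ≠ a := fun hh => hai (by rw [hh])
        have hd_pos : 1 ≤ (i.val + n - t % n) % n := by
          rw [hdist]; split <;> omega
        have hd1 : (i.val + n - (t + 1) % n) % n = (i.val + n - t % n) % n - 1 := by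
          rw [hstep, hdist]
          split
          · next he => rw [dist_eq hin hn]; split <;> split <;> omega
          · next he => rw [dist_eq hin (by omega)]; split <;> split <;> omega
        have hupd : Function.update A a (insert j (A a)) i = A i :=
          Function.update_of_ne haine _ _
        have hIH := ih (R.erase j) hcard (t + 1)
          (Function.update A a (insert j (A a))) m hm
          (fun k hk => hnn k (Finset.mem_of_mem_erase hk))
          (fun k hk => hub k (Finset.mem_of_mem_erase hk))
          (by
            rw [hupd]
            exact Finset.disjoint_of_subset_left (Finset.erase_subset _ _) hdisj)
        rw [hupd, hsum_erase, hd1] at hIH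
        have hvjm : v i j ≤ m := hub j hjR
        have hcast : (((i.val + n - t % n) % n - 1 : ℕ) : ℝ)
            = (((i.val + n - t % n) % n : ℕ) : ℝ) - 1 := by
          push_cast [Nat.cast_sub hd_pos]
          ring
        rw [hcast] at hIH
        nlinarith [hIH]
    · rw [greedyAux, dif_neg h]
      rw [Finset.not_nonempty_iff_eq_empty.mp h]
      simp only [Finset.sum_empty, add_zero]
      have : (0 : ℝ) ≤ (((i.val + n - t % n) % n : ℕ) : ℝ) * m :=
        mul_nonneg (Nat.cast_nonneg _) hm
      linarith

lemma mms_le_avg {ι : Type*} [DecidableEq ι] (n : ℕ) (hn : 0 < n) (M : Finset ι)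
    (v : ι → ℝ) (h0 : 0 ≤ M.sum v) : mms n M v ≤ M.sum v / n := by
  apply Real.sSup_le _ (div_nonneg h0 (Nat.cast_nonneg n))
  rintro x ⟨P, ⟨hdisj, hcover⟩, rfl⟩
  have hbdd : BddBelow (Set.range fun j : Fin n => (P j).sum v) :=
    (Set.finite_range _).bddBelow
  have hle : ∀ j : Fin n, (⨅ j : Fin n, (P j).sum v) ≤ (P j).sum v :=
    fun j => ciInf_le hbdd j
  have hsum : ∑ j : Fin n, (P j).sum v = M.sum v := by
    rw [← hcover]
    exact (Finset.sum_biUnion (fun x _ y _ hxy => hdisj x y hxy)).symm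
  have hkey : (n : ℝ) * (⨅ j : Fin n, (P j).sum v) ≤ M.sum v := by
    calc (n : ℝ) * (⨅ j : Fin n, (P j).sum v)
        = ∑ _j : Fin n, (⨅ j : Fin n, (P j).sum v) := by
          rw [Finset.sum_const, Finset.card_univ, Fintype.card_fin, nsmul_eq_mul]
      _ ≤ ∑ j : Fin n, (P j).sum v := Finset.sum_le_sum fun j _ => hle j
      _ = M.sum v := hsum
  rw [le_div_iff₀ (by exact_mod_cast hn)]
  linarith

/-- the Greedy Round-Robin algorithm produces a partition of `M` in
which every agent `i` receives value at least `(Σ_{j∈M} v_{ij})/n − v_max`, hence at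
least `μ_i(n, M) − v_max`, where `v_max = max_{i∈N, j∈M} v_{ij}`. -/
theorem greedy_round_robin_additive_approx {ι : Type*} [LinearOrder ι]
    (n : ℕ) (hn : 0 < n) (M : Finset ι) (hM : M.Nonempty)
    (v : Fin n → ι → ℝ) (hv : ∀ i : Fin n, ∀ j ∈ M, 0 ≤ v i j)
    (vmax : ℝ) (hub : ∀ i : Fin n, ∀ j ∈ M, v i j ≤ vmax)
    (hattained : ∃ i : Fin n, ∃ j ∈ M, v i j = vmax) :
    IsPartition n M (greedyRoundRobin n hn v M) ∧
      ∀ i : Fin n,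
        M.sum (v i) / n - vmax ≤ (greedyRoundRobin n hn v M i).sum (v i) ∧
        mms n M (v i) - vmax ≤ (greedyRoundRobin n hn v M i).sum (v i) := by
  simp only [greedyRoundRobin]
  obtain ⟨hd, hcov⟩ := greedyAux_partition n hn v M.card M le_rfl 0 (fun _ => ∅)
    (fun i j _ => by simp) (fun i => by simp)
  have hcov' : Finset.univ.biUnion (greedyAux n hn v M 0 fun _ => ∅) = M := by
    rw [hcov]; simp
  refine ⟨⟨hd, hcov'⟩, ?_⟩
  intro i
  have hvmax0 : 0 ≤ vmax := by
    obtain ⟨i0, j0, hj0, he⟩ := hattained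
    exact he ▸ hv i0 j0 hj0
  have hval := greedyAux_value n hn v i M.card M le_rfl 0 (fun _ => ∅) vmax hvmax0
    (fun k hk => hv i k hk) (fun k hk => hub i k hk) (by simp)
  simp only [Finset.sum_empty, mul_zero, zero_add] at hval
  have hdist0 : (i.val + n - 0 % n) % n = i.val := by
    rw [Nat.zero_mod, dist_eq i.isLt hn]
    simp
  rw [hdist0] at hval
  have hn' : (0 : ℝ) < n := by exact_mod_cast hn
  have hiv : (i.val : ℝ) ≤ n := by exact_mod_cast i.isLt.le
  have h1 : M.sum (v i) / n - vmax ≤ ((greedyAux n hn v M 0 fun _ => ∅) i).sum (v i) := by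
    rw [sub_le_iff_le_add, div_le_iff₀ hn']
    have hm : (i.val : ℝ) * vmax ≤ (n : ℝ) * vmax :=
      mul_le_mul_of_nonneg_right hiv hvmax0
    nlinarith [hval]
  refine ⟨h1, ?_⟩
  have h0 : 0 ≤ M.sum (v i) := Finset.sum_nonneg (fun k hk => hv i k hk)
  have := mms_le_avg n hn M (v i) h0
  linarith
end

section
/- Let (S_1, …, S_n) be the partition of M produced by the Greedy Round-Robin algorithm for n agents with additive valuations. Then for every pair of agents i, j it holds that v_i(S_i) ≥ v_i(S_j) − v_max, where v_max = max_{i∈N, j∈M} v_{ij}. -/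
section Helpers

private lemma rrMod_succ (n t : ℕ) (hn : 0 < n) :
    (t + 1) % n = if t % n = n - 1 then 0 else t % n + 1 := by
  rcases eq_or_lt_of_le (show 1 ≤ n from hn) with h1 | h1
  · simp [← h1, Nat.mod_one]
  · have h2 : (t + 1) % n = (t % n + 1) % n := by
      conv_lhs => rw [Nat.add_mod, Nat.mod_eq_of_lt h1]
    have ht : t % n < n := Nat.mod_lt t hn
    split_ifs with h
    · rw [h2, h, show n - 1 + 1 = n by omega, Nat.mod_self]
    · rw [h2, Nat.mod_eq_of_lt (by omega)]

private lemma rrPos_eq (n c a : ℕ) (ha : a < n) (hc : c < n) :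
    (a + n - c) % n = if c ≤ a then a - c else a + n - c := by
  split_ifs with h
  · have e : a + n - c = (a - c) + n := by omega
    rw [e, Nat.add_mod_right, Nat.mod_eq_of_lt (by omega)]
  · exact Nat.mod_eq_of_lt (by omega)

private lemma rrPos_succ_lt (n t a : ℕ) (hn : 0 < n) (ha : a < n) (hat : a ≠ t % n) :
    (a + n - (t + 1) % n) % n + 1 = (a + n - t % n) % n := by
  have ht : t % n < n := Nat.mod_lt t hn
  rw [rrMod_succ n t hn]
  split_ifs with h
  · have e1 : a + n - 0 = (a + n) := by omega
    have e2 : a + n - t % n = a + 1 := by omega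
    rw [e1, e2, Nat.add_mod_right, Nat.mod_eq_of_lt ha, Nat.mod_eq_of_lt (by omega)]
  · rw [rrPos_eq n (t % n + 1) a ha (by omega), rrPos_eq n (t % n) a ha ht]
    split_ifs <;> omega

private lemma rrPos_succ_self (n t : ℕ) (hn : 0 < n) :
    (t % n + n - (t + 1) % n) % n = n - 1 := by
  have ht : t % n < n := Nat.mod_lt t hn
  rw [rrMod_succ n t hn]
  split_ifs with h
  · have e1 : t % n + n - 0 = (t % n) + n := by omega
    rw [e1, Nat.add_mod_right, Nat.mod_eq_of_lt ht, h]
  · have e1 : t % n + n - (t % n + 1) = n - 1 := by omega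
    rw [e1, Nat.mod_eq_of_lt (by omega)]

private lemma rrSdiff_insert_sum {ι : Type*} [DecidableEq ι] (s A : Finset ι) (g : ι)
    (hg : g ∈ s) (hgA : g ∉ A) (f : ι → ℝ) :
    (s \ A).sum f = f g + (s \ insert g A).sum f := by
  have h1 : s \ A = insert g (s \ insert g A) := by
    ext x
    simp only [Finset.mem_sdiff, Finset.mem_insert]
    by_cases hx : x = g
    · subst hx; simp [hg, hgA]
    · simp [hx]
  rw [h1, Finset.sum_insert (by simp)]

end Helpers
open Classical in
private lemma greedyAux_pos {ι : Type*} [LinearOrder ι] (n : ℕ) (hn : 0 < n)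
    (v : Fin n → ι → ℝ) (R : Finset ι) (t : ℕ) (A : Fin n → Finset ι) (h : R.Nonempty)
    (c : Fin n) (hc : c = ⟨t % n, Nat.mod_lt t hn⟩)
    (hne : (R.filter fun j => ∀ k ∈ R, v c k ≤ v c j).Nonempty)
    (g : ι) (hg : g = (R.filter fun j => ∀ k ∈ R, v c k ≤ v c j).min' hne) :
    greedyAux n hn v R t A =
      greedyAux n hn v (R.erase g) (t + 1) (Function.update A c (insert g (A c))) := by
  subst hc; subst hg
  rw [greedyAux]
  rw [dif_pos h]

private lemma subset_greedyAux {ι : Type*} [LinearOrder ι] (n : ℕ) (hn : 0 < n)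
    (v : Fin n → ι → ℝ) (k : Fin n) :
    ∀ (m : ℕ) (R : Finset ι), R.card = m → ∀ (t : ℕ) (A : Fin n → Finset ι),
      A k ⊆ greedyAux n hn v R t A k := by
  intro m
  induction m using Nat.strong_induction_on with
  | _ m IH =>
  intro R hR t A
  by_cases h : R.Nonempty
  · obtain ⟨c, hc⟩ : ∃ c : Fin n, c = (⟨t % n, Nat.mod_lt t hn⟩ : Fin n) := ⟨_, rfl⟩
    have hne : (R.filter fun j' => ∀ k' ∈ R, v c k' ≤ v c j').Nonempty := by
      obtain ⟨j', hj', hmax⟩ := R.exists_max_image (v c) h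
      exact ⟨j', Finset.mem_filter.mpr ⟨hj', hmax⟩⟩
    obtain ⟨g, hg⟩ : ∃ g, g = (R.filter fun j' => ∀ k' ∈ R, v c k' ≤ v c j').min' hne :=
      ⟨_, rfl⟩
    have hgR : g ∈ R := Finset.mem_of_mem_filter _ (hg ▸ Finset.min'_mem _ hne)
    rw [greedyAux_pos n hn v R t A h c hc hne g hg]
    have hcard : (R.erase g).card < m := hR ▸ Finset.card_erase_lt_of_mem hgR
    refine subset_trans ?_ (IH _ hcard _ rfl (t + 1) _)
    by_cases hk : k = c
    · subst hk
      rw [Function.update_self]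
      exact Finset.subset_insert _ _
    · rw [Function.update_of_ne hk]
  · rw [greedyAux, dif_neg h]

private lemma greedy_key {ι : Type*} [LinearOrder ι] (n : ℕ) (hn : 0 < n)
    (v : Fin n → ι → ℝ) :
    ∀ (m : ℕ) (R : Finset ι), R.card = m → ∀ (t : ℕ) (A : Fin n → Finset ι)
      (i j : Fin n) (B : ℝ), 0 ≤ B → (∀ r ∈ R, 0 ≤ v i r ∧ v i r ≤ B) →
      (∀ k : Fin n, ∀ r ∈ R, r ∉ A k) →
      ((greedyAux n hn v R t A j \ A j).sum (v i) ≤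
        (greedyAux n hn v R t A i \ A i).sum (v i) + B) ∧
      (((i : ℕ) + n - t % n) % n ≤ ((j : ℕ) + n - t % n) % n →
        (greedyAux n hn v R t A j \ A j).sum (v i) ≤
        (greedyAux n hn v R t A i \ A i).sum (v i)) := by
  intro m
  induction m using Nat.strong_induction_on with
  | _ m IH =>
  intro R hR t A i j B hB hBd hdisj
  by_cases h : R.Nonempty
  case neg =>
    rw [greedyAux, dif_neg h]
    simp only [Finset.sdiff_self, Finset.sum_empty]
    exact ⟨by linarith, fun _ => le_refl 0⟩
  obtain ⟨c, hc⟩ : ∃ c : Fin n, c = (⟨t % n, Nat.mod_lt t hn⟩ : Fin n) := ⟨_, rfl⟩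
  have hne : (R.filter fun j' => ∀ k ∈ R, v c k ≤ v c j').Nonempty := by
    obtain ⟨j', hj', hmax⟩ := R.exists_max_image (v c) h
    exact ⟨j', Finset.mem_filter.mpr ⟨hj', hmax⟩⟩
  obtain ⟨g, hg⟩ : ∃ g, g = (R.filter fun j' => ∀ k ∈ R, v c k ≤ v c j').min' hne := ⟨_, rfl⟩
  have hgF : g ∈ R.filter fun j' => ∀ k ∈ R, v c k ≤ v c j' := hg ▸ Finset.min'_mem _ hne
  have hgR : g ∈ R := Finset.mem_of_mem_filter _ hgF
  have hgmax : ∀ r ∈ R, v c r ≤ v c g := (Finset.mem_filter.mp hgF).2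
  have hE := greedyAux_pos n hn v R t A h c hc hne g hg
  set R' := R.erase g with hR'
  set A' := Function.update A c (insert g (A c)) with hA'
  set S' := greedyAux n hn v R' (t + 1) A' with hS'
  rw [hE]
  have hcv : (c : ℕ) = t % n := by rw [hc]
  have hcard : R'.card < m := hR ▸ Finset.card_erase_lt_of_mem hgR
  have hdisj' : ∀ k : Fin n, ∀ r ∈ R', r ∉ A' k := by
    intro k r hr
    have hrR : r ∈ R := Finset.mem_of_mem_erase hr
    have hrg : r ≠ g := Finset.ne_of_mem_erase hr
    by_cases hk : k = c
    · subst hk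
      rw [hA', Function.update_self]
      simp [hrg, hdisj k r hrR]
    · rw [hA', Function.update_of_ne hk]
      exact hdisj k r hrR
  have hsub' : ∀ r ∈ R', 0 ≤ v i r ∧ v i r ≤ B := fun r hr => hBd r (Finset.mem_of_mem_erase hr)
  have hAc : A' c = insert g (A c) := by rw [hA', Function.update_self]
  have hgS : g ∈ S' c := subset_greedyAux n hn v c R'.card R' rfl (t + 1) A'
    (by rw [hAc]; exact Finset.mem_insert_self _ _)
  have hsum_c : (S' c \ A c).sum (v i) = v i g + (S' c \ A' c).sum (v i) := by
    rw [hAc]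
    exact rrSdiff_insert_sum (S' c) (A c) g hgS (hdisj c g hgR) (v i)
  by_cases hij : i = j
  · subst hij
    exact ⟨by linarith, fun _ => le_refl _⟩
  by_cases hic : i = c
  · subst hic
    have hBg : 0 ≤ v i g := (hBd g hgR).1
    have hsub2 : ∀ r ∈ R', 0 ≤ v i r ∧ v i r ≤ v i g := fun r hr =>
      ⟨(hBd r (Finset.mem_of_mem_erase hr)).1, hgmax r (Finset.mem_of_mem_erase hr)⟩
    have key := IH R'.card hcard R' rfl (t + 1) A' i j (v i g) hBg hsub2 hdisj'
    have hAj : A' j = A j := Function.update_of_ne (fun hcon => hij hcon.symm) _ _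
    have h1 : (S' j \ A j).sum (v i) ≤ (S' i \ A i).sum (v i) := by
      calc (S' j \ A j).sum (v i) = (S' j \ A' j).sum (v i) := by rw [hAj]
        _ ≤ (S' i \ A' i).sum (v i) + v i g := key.1
        _ = (S' i \ A i).sum (v i) := by rw [hsum_c]; ring
    exact ⟨by linarith, fun _ => h1⟩
  by_cases hjc : j = c
  · subst hjc
    have key := IH R'.card hcard R' rfl (t + 1) A' i j B hB hsub' hdisj'
    have hjv : (j : ℕ) = t % n := hcv
    have hcond : ((i : ℕ) + n - (t + 1) % n) % n ≤ ((j : ℕ) + n - (t + 1) % n) % n := by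
      have e1 : ((j : ℕ) + n - (t + 1) % n) % n = n - 1 := by
        rw [hjv]; exact rrPos_succ_self n t hn
      have e2 : ((i : ℕ) + n - (t + 1) % n) % n < n := Nat.mod_lt _ hn
      omega
    have h2 := key.2 hcond
    have hAi : A' i = A i := Function.update_of_ne hic _ _
    have hvg : v i g ≤ B := (hBd g hgR).2
    constructor
    · rw [hsum_c, ← hAi]
      linarith
    · intro hpos
      exfalso
      have e0 : (j : ℕ) + n - t % n = n := by omega
      rw [e0, Nat.mod_self, Nat.le_zero] at hpos
      rw [rrPos_eq n (t % n) (i : ℕ) i.isLt (Nat.mod_lt t hn)] at hpos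
      have : (i : ℕ) = t % n := by
        split_ifs at hpos <;> omega
      exact hic (Fin.ext (by rw [this, hcv]))
  · have key := IH R'.card hcard R' rfl (t + 1) A' i j B hB hsub' hdisj'
    have hAi : A' i = A i := Function.update_of_ne hic _ _
    have hAj : A' j = A j := Function.update_of_ne hjc _ _
    rw [← hAi, ← hAj]
    refine ⟨key.1, fun hpos => key.2 ?_⟩
    have hiv : (i : ℕ) ≠ t % n := fun hcon => hic (Fin.ext (by rw [hcon, hcv]))
    have hjv : (j : ℕ) ≠ t % n := fun hcon => hjc (Fin.ext (by rw [hcon, hcv]))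
    have l3i := rrPos_succ_lt n t (i : ℕ) hn i.isLt hiv
    have l3j := rrPos_succ_lt n t (j : ℕ) hn j.isLt hjv
    omega
/-- in the allocation `(S 0, …, S (n−1))` produced by the Greedy
Round-Robin algorithm, every agent `i` envies any agent `j` by at most `v_max`:
`v_i(S i) ≥ v_i(S j) − v_max`, where `v_max = max_{i∈N, j∈M} v_{ij}`. -/
theorem greedy_round_robin_bounded_envy {ι : Type*} [LinearOrder ι]
    (n : ℕ) (hn : 0 < n) (M : Finset ι) (hM : M.Nonempty)
    (v : Fin n → ι → ℝ) (hv : ∀ i : Fin n, ∀ j ∈ M, 0 ≤ v i j)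
    (vmax : ℝ) (hub : ∀ i : Fin n, ∀ j ∈ M, v i j ≤ vmax)
    (hattained : ∃ i : Fin n, ∃ j ∈ M, v i j = vmax)
    (S : Fin n → Finset ι) (hS : S = greedyRoundRobin n hn v M) :
    ∀ i j : Fin n, (S j).sum (v i) - vmax ≤ (S i).sum (v i) := by
  subst hS
  intro i j
  have h0 : 0 ≤ vmax := by
    obtain ⟨a, b, hb, hab⟩ := hattained
    exact hab ▸ hv a b hb
  have key := (greedy_key n hn v M.card M rfl 0 (fun _ => ∅) i j vmax h0
    (fun r hr => ⟨hv i r hr, hub i r hr⟩) (fun k r _ => Finset.notMem_empty r)).1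
  unfold greedyRoundRobin
  simp only [Finset.sdiff_empty] at key
  linarith
end

section
/- (Monotonicity property) For every agent i with an additive valuation over a finite set M of goods, every n ≥ 2, and every single good j ∈ M, it holds that μ_i(n − 1, M \ {j}) ≥ μ_i(n, M). -/
lemma bddAbove_mms_set {ι : Type*} [DecidableEq ι] (n : ℕ) (hn : 0 < n) (S : Finset ι)
    (v : ι → ℝ) (hv : ∀ k ∈ S, 0 ≤ v k) :
    BddAbove {x : ℝ | ∃ P : Fin n → Finset ι,
      IsPartition n S P ∧ x = ⨅ j : Fin n, (P j).sum v} := by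
  refine ⟨S.sum v, ?_⟩
  rintro x ⟨P, hP, rfl⟩
  have i0 : Fin n := ⟨0, hn⟩
  calc ⨅ j : Fin n, (P j).sum v ≤ (P i0).sum v :=
        ciInf_le (Set.finite_range _).bddBelow i0
    _ ≤ S.sum v := by
        apply Finset.sum_le_sum_of_subset_of_nonneg
        · intro x hx
          rw [← hP.2]; exact Finset.mem_biUnion.mpr ⟨i0, Finset.mem_univ _, hx⟩
        · intro k hk _; exact hv k hk

/-- Monotonicity property: removing a single good `j` and one agent
does not decrease the maximin share: `μ(n − 1, M \ {j}) ≥ μ(n, M)`. -/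
theorem mms_monotonicity {ι : Type*} [DecidableEq ι]
    (n : ℕ) (hn : 2 ≤ n) (M : Finset ι) (j : ι) (hj : j ∈ M)
    (v : ι → ℝ) (hv : ∀ k ∈ M, 0 ≤ v k) :
    mms n M v ≤ mms (n - 1) (M.erase j) v := by
  obtain ⟨m, rfl⟩ : ∃ m, n = m + 2 := ⟨n - 2, by omega⟩
  have hv' : ∀ k ∈ M.erase j, 0 ≤ v k := fun a ha => hv a (Finset.mem_of_mem_erase ha)
  have hB : BddAbove {x : ℝ | ∃ P : Fin (m + 2 - 1) → Finset ι,
      IsPartition (m + 2 - 1) (M.erase j) P ∧ x = ⨅ i : Fin (m + 2 - 1), (P i).sum v} :=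
    bddAbove_mms_set (m + 1) (by omega) _ v hv'
  unfold mms
  apply csSup_le
  · -- nonemptiness of the source set
    refine ⟨_, fun i => if i = 0 then M else ∅, ⟨?_, ?_⟩, rfl⟩
    · intro i i' hne
      dsimp only
      split_ifs with h1 h2
      · exact absurd (h1.trans h2.symm) hne
      · simp
      · simp
      · simp
    · ext x
      simp only [Finset.mem_biUnion, Finset.mem_univ, true_and]
      constructor
      · rintro ⟨i, hi⟩
        by_cases h : i = 0 <;> simp [h] at hi
        exact hi
      · intro hx; exact ⟨0, by simp [hx]⟩
  · rintro x ⟨P, hP, rfl⟩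
    have hj' : j ∈ Finset.univ.biUnion P := hP.2 ▸ hj
    obtain ⟨k, -, hk⟩ := Finset.mem_biUnion.mp hj'
    set Q : Fin (m + 1) → Finset ι := fun i =>
      if i = 0 then P (k.succAbove 0) ∪ (P k).erase j else P (k.succAbove i) with hQ
    have hsubM : ∀ l, P l ⊆ M := by
      intro l x hx
      rw [← hP.2]; exact Finset.mem_biUnion.mpr ⟨l, Finset.mem_univ _, hx⟩
    have hdisjE : ∀ i : Fin (m + 1), Disjoint ((P k).erase j) (P (k.succAbove i)) := by
      intro i
      exact Finset.disjoint_of_subset_left (Finset.erase_subset _ _)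
        (hP.1 k _ (Fin.succAbove_ne k i).symm)
    have hPart : IsPartition (m + 1) (M.erase j) Q := by
      constructor
      · intro i i' hne
        have base : ∀ a b : Fin (m + 1), a ≠ b → Disjoint (P (k.succAbove a)) (P (k.succAbove b)) :=
          fun a b hab => hP.1 _ _ (fun h => hab ((Fin.succAbove_right_injective (p := k)) h))
        simp only [hQ]
        by_cases h1 : i = 0 <;> by_cases h2 : i' = 0 <;> simp only [h1, h2, if_pos, if_neg,
          if_true, if_false]
        · exact absurd (h1.trans h2.symm) hne
        · refine Finset.disjoint_union_left.mpr ⟨?_, ?_⟩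
          · exact base 0 i' (fun h => h2 h.symm)
          · exact hdisjE i'
        · refine Finset.disjoint_union_right.mpr ⟨?_, ?_⟩
          · exact base i 0 h1
          · exact (hdisjE i).symm
        · exact base i i' hne
      · ext x
        simp only [Finset.mem_biUnion, Finset.mem_univ, true_and, Finset.mem_erase]
        constructor
        · rintro ⟨i, hi⟩
          simp only [hQ] at hi
          have key : ∀ i' : Fin (m + 1), x ∈ P (k.succAbove i') → x ≠ j ∧ x ∈ M := by
            intro i' hx
            refine ⟨?_, hsubM _ hx⟩
            intro h
            exact (Finset.disjoint_left.mp (hP.1 k _ (Fin.succAbove_ne k i').symm)) hk (h ▸ hx)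
          split_ifs at hi with h
          · rcases Finset.mem_union.mp hi with hx | hx
            · exact key 0 hx
            · exact ⟨Finset.ne_of_mem_erase hx, hsubM k (Finset.mem_of_mem_erase hx)⟩
          · exact key i hi
        · rintro ⟨hxj, hxM⟩
          rw [← hP.2] at hxM
          obtain ⟨l, -, hl⟩ := Finset.mem_biUnion.mp hxM
          by_cases hlk : l = k
          · refine ⟨0, ?_⟩
            simp only [hQ, if_pos rfl]
            exact Finset.mem_union_right _ (Finset.mem_erase.mpr ⟨hxj, hlk ▸ hl⟩)
          · obtain ⟨i, hi⟩ := Fin.exists_succAbove_eq hlk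
            refine ⟨i, ?_⟩
            simp only [hQ]
            split_ifs with h
            · exact Finset.mem_union_left _ (by rw [h] at hi; rwa [hi])
            · rwa [hi]
    have hle : (⨅ l : Fin (m + 2), (P l).sum v) ≤ ⨅ i : Fin (m + 1), (Q i).sum v := by
      apply le_ciInf
      intro i
      have h1 : (⨅ l : Fin (m + 2), (P l).sum v) ≤ (P (k.succAbove i)).sum v :=
        ciInf_le (Set.finite_range _).bddBelow _
      refine h1.trans ?_
      simp only [hQ]
      split_ifs with h
      · subst h
        rw [Finset.sum_union (hdisjE 0).symm]
        have : 0 ≤ ((P k).erase j).sum v :=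
          Finset.sum_nonneg fun a ha => hv a (hsubM k (Finset.mem_of_mem_erase ha))
        linarith
      · exact le_refl _
    exact hle.trans (le_csSup hB ⟨Q, hPart, rfl⟩)
end

section
/- (Density Balance Lemma) For every n ≥ 2, let λ_n = 2⌊n⌋_odd / (3⌊n⌋_odd − 1), where ⌊n⌋_odd is the largest odd integer less than or equal to n. Then: (a) λ_n > 2/3; (b) for every finite set M of goods, every additive valuation v_i with nonnegative item values, every subset S ⊆ M, and all integers k ≥ 1, ℓ ≥ 0 with k + ℓ = n, if v_i(M \ S) ≤ ℓ · λ_n · μ_i(n, M), then μ_i(k, S) ≥ λ_n · μ_i(n, M); and (c) λ_n is the largest real number λ for which the implication in (b) (with λ in place of λ_n) holds for all such M, v_i, S, k, ℓ. -/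
/-- The largest odd integer less than or equal to `n`. -/
def oddFloor (n : ℕ) : ℕ := if n % 2 = 1 then n else n - 1

/-- The density-balance property of a real number `λ` for `n` agents: for every
finite set `M` of goods, every additive nonnegative valuation `v`, every `S ⊆ M`,
and all `k ≥ 1`, `ℓ ≥ 0` with `k + ℓ = n`: if `v(M \ S) ≤ ℓ·λ·μ(n, M)` then
`μ(k, S) ≥ λ·μ(n, M)`. -/
def DensityBalanceProp (n : ℕ) (lam : ℝ) : Prop :=
  ∀ (ι : Type) [DecidableEq ι], ∀ (M : Finset ι) (v : ι → ℝ),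
    (∀ j ∈ M, 0 ≤ v j) → ∀ S ⊆ M, ∀ k ℓ : ℕ, 1 ≤ k → k + ℓ = n →
      (M \ S).sum v ≤ (ℓ : ℝ) * lam * mms n M v → lam * mms n M v ≤ mms k S v

namespace DBaux

noncomputable def lamr (m : ℕ) : ℝ := 2 * (m:ℝ) / (3 * (m:ℝ) - 1)

lemma denom_pos {m : ℕ} (hm : 1 ≤ m) : (0:ℝ) < 3 * (m:ℝ) - 1 := by
  have : (1:ℝ) ≤ (m:ℝ) := by exact_mod_cast hm
  linarith

lemma lamr_pos {m : ℕ} (hm : 1 ≤ m) : 0 < lamr m := by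
  have h := denom_pos hm
  have : (1:ℝ) ≤ (m:ℝ) := by exact_mod_cast hm
  exact div_pos (by linarith) h

lemma lamr_le_one {m : ℕ} (hm : 1 ≤ m) : lamr m ≤ 1 := by
  have h := denom_pos hm
  have : (1:ℝ) ≤ (m:ℝ) := by exact_mod_cast hm
  rw [lamr, div_le_one h]; linarith

lemma two_thirds_lt_lamr {m : ℕ} (hm : 1 ≤ m) : (2/3 : ℝ) < lamr m := by
  have h := denom_pos hm
  have : (1:ℝ) ≤ (m:ℝ) := by exact_mod_cast hm
  rw [lamr, lt_div_iff₀ h]; linarith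

lemma one_sub_lamr {m : ℕ} (hm : 1 ≤ m) : 1 - lamr m = ((m:ℝ) - 1) / (3 * (m:ℝ) - 1) := by
  have h := denom_pos hm
  rw [lamr, eq_div_iff h.ne', sub_mul, div_mul_cancel₀ _ h.ne']; ring

lemma three_lamr_sub_two {m : ℕ} (hm : 1 ≤ m) : 3 * lamr m - 2 = 2 / (3 * (m:ℝ) - 1) := by
  have h := denom_pos hm
  rw [lamr]; field_simp; ring

variable {ι : Type*} [DecidableEq ι]

/-- the trivial partition -/
def trivP (n : ℕ) (hn : 0 < n) (S : Finset ι) : Fin n → Finset ι :=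
  fun j => if j = ⟨0, hn⟩ then S else ∅

lemma trivP_isPartition (n : ℕ) (hn : 0 < n) (S : Finset ι) :
    IsPartition n S (trivP n hn S) := by
  constructor
  · intro i j hij
    unfold trivP
    split_ifs with h1 h2
    · exact absurd (h1.trans h2.symm) hij
    · simp
    · simp
    · simp
  · ext x
    simp only [Finset.mem_biUnion, Finset.mem_univ, true_and, trivP]
    constructor
    · rintro ⟨j, hj⟩
      split_ifs at hj with h
      · exact hj
      · simp at hj
    · intro hx
      exact ⟨⟨0, hn⟩, by simp [hx]⟩

lemma subset_of_partition {n : ℕ} {S : Finset ι} {P : Fin n → Finset ι}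
    (hP : IsPartition n S P) (j : Fin n) : P j ⊆ S := by
  rw [← hP.2]; exact Finset.subset_biUnion_of_mem P (Finset.mem_univ j)

lemma mms_bddAbove {n : ℕ} (hn : 0 < n) {S : Finset ι} {v : ι → ℝ}
    (hv : ∀ j ∈ S, 0 ≤ v j) :
    BddAbove {x : ℝ | ∃ P : Fin n → Finset ι,
      IsPartition n S P ∧ x = ⨅ j : Fin n, (P j).sum v} := by
  refine ⟨S.sum v, ?_⟩
  rintro x ⟨P, hP, rfl⟩
  have hj : (⨅ j : Fin n, (P j).sum v) ≤ (P ⟨0, hn⟩).sum v :=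
    ciInf_le (Set.finite_range _).bddBelow _
  refine hj.trans ?_
  exact Finset.sum_le_sum_of_subset_of_nonneg (subset_of_partition hP _)
    (fun i hi _ => hv i hi)

lemma le_mms {n : ℕ} (hn : 0 < n) {S : Finset ι} {v : ι → ℝ}
    (hv : ∀ j ∈ S, 0 ≤ v j) {P : Fin n → Finset ι} (hP : IsPartition n S P)
    {c : ℝ} (hc : ∀ j, c ≤ (P j).sum v) : c ≤ mms n S v := by
  have : Nonempty (Fin n) := ⟨⟨0, hn⟩⟩
  exact le_csSup_of_le (mms_bddAbove hn hv) ⟨P, hP, rfl⟩ (le_ciInf hc)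

lemma mms_le {n : ℕ} (hn : 0 < n) {S : Finset ι} {v : ι → ℝ} {c : ℝ}
    (h : ∀ P : Fin n → Finset ι, IsPartition n S P → ∃ j, (P j).sum v ≤ c) :
    mms n S v ≤ c := by
  have hne : {x : ℝ | ∃ P : Fin n → Finset ι,
      IsPartition n S P ∧ x = ⨅ j : Fin n, (P j).sum v}.Nonempty :=
    ⟨_, ⟨trivP n hn S, trivP_isPartition n hn S, rfl⟩⟩
  apply csSup_le hne
  rintro x ⟨P, hP, rfl⟩
  obtain ⟨j, hj⟩ := h P hP
  exact (ciInf_le (Set.finite_range _).bddBelow j).trans hj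

lemma mms_nonneg {n : ℕ} (hn : 0 < n) {S : Finset ι} {v : ι → ℝ}
    (hv : ∀ j ∈ S, 0 ≤ v j) : 0 ≤ mms n S v := by
  refine le_mms hn hv (trivP_isPartition n hn S) (fun j => ?_)
  unfold trivP
  split_ifs
  · exact Finset.sum_nonneg (fun i hi => hv i hi)
  · simp

lemma exists_opt {n : ℕ} (hn : 0 < n) {S : Finset ι} {v : ι → ℝ}
    (hv : ∀ j ∈ S, 0 ≤ v j) :
    ∃ P : Fin n → Finset ι, IsPartition n S P ∧ ∀ j, mms n S v ≤ (P j).sum v := by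
  classical
  set A := {x : ℝ | ∃ P : Fin n → Finset ι,
      IsPartition n S P ∧ x = ⨅ j : Fin n, (P j).sum v} with hA
  have hfin : A.Finite := by
    have hp : {P : Fin n → Finset ι | ∀ j, P j ⊆ S}.Finite := by
      have : {P : Fin n → Finset ι | ∀ j, P j ⊆ S} =
          Set.pi Set.univ (fun _ => {T : Finset ι | T ⊆ S}) := by
        ext P; simp [Set.mem_pi]
      rw [this]
      exact Set.Finite.pi (fun _ => by
        have : {T : Finset ι | T ⊆ S} = ↑S.powerset := by
          ext T; simp [Finset.mem_powerset]
        rw [this]; exact (S.powerset).finite_toSet)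
    apply Set.Finite.subset (hp.image (fun P => ⨅ j : Fin n, (P j).sum v))
    rintro x ⟨P, hP, rfl⟩
    exact ⟨P, fun j => subset_of_partition hP j, rfl⟩
  have hne : A.Nonempty := ⟨_, ⟨trivP n hn S, trivP_isPartition n hn S, rfl⟩⟩
  have hmem : mms n S v ∈ A := hne.csSup_mem hfin
  obtain ⟨P, hP, heq⟩ := hmem
  exact ⟨P, hP, fun j => heq ▸ ciInf_le (Set.finite_range _).bddBelow j⟩


/-- union of a list of finsets -/
def U (gs : List (Finset ι)) : Finset ι := gs.foldr (· ∪ ·) ∅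

@[simp] lemma U_nil : U ([] : List (Finset ι)) = ∅ := rfl
@[simp] lemma U_cons (G : Finset ι) (gs : List (Finset ι)) : U (G :: gs) = G ∪ U gs := rfl

lemma mem_U {gs : List (Finset ι)} {x : ι} : x ∈ U gs ↔ ∃ G ∈ gs, x ∈ G := by
  induction gs with
  | nil => simp
  | cons G gs ih => simp [ih, Finset.mem_union]

lemma disjoint_U {gs : List (Finset ι)} {t : Finset ι}
    (h : ∀ G ∈ gs, Disjoint t G) : Disjoint t (U gs) := by
  rw [Finset.disjoint_left]
  intro a ha hma
  obtain ⟨G, hG, haG⟩ := mem_U.1 hma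
  exact (Finset.disjoint_left.1 (h G hG)) ha haG

lemma U_sum {gs : List (Finset ι)} (hpw : List.Pairwise Disjoint gs) (f : ι → ℝ) :
    (U gs).sum f = (gs.map (fun G => G.sum f)).sum := by
  induction gs with
  | nil => simp
  | cons G gs ih =>
    rw [List.pairwise_cons] at hpw
    rw [U_cons, Finset.sum_union (disjoint_U hpw.1), List.map_cons, List.sum_cons,
      ih hpw.2]

lemma U_card {gs : List (Finset ι)} (hpw : List.Pairwise Disjoint gs) :
    (U gs).card = (gs.map Finset.card).sum := by
  induction gs with
  | nil => simp
  | cons G gs ih =>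
    rw [List.pairwise_cons] at hpw
    rw [U_cons, Finset.card_union_of_disjoint (disjoint_U hpw.1), List.map_cons,
      List.sum_cons, ih hpw.2]

lemma greedy (lam : ℝ) (hlam : 0 < lam) (w : ι → ℝ) :
    ∀ T : Finset ι, (∀ j ∈ T, 0 ≤ w j) →
    ∃ (gs : List (Finset ι)) (lf : Finset ι),
      (∀ G ∈ gs, G ⊆ T) ∧ List.Pairwise Disjoint gs ∧ (∀ G ∈ gs, Disjoint lf G) ∧
      (lf ∪ U gs = T) ∧ (∀ G ∈ gs, G.Nonempty) ∧ (∀ G ∈ gs, lam ≤ G.sum w) ∧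
      (∀ G ∈ gs, 2 ≤ G.card → ((G.card:ℝ) - 1) * G.sum w < lam * G.card) ∧
      lf.sum w < lam := by
  classical
  intro T
  induction T using Finset.strongInduction with
  | _ T ih =>
  intro hw
  by_cases hA : ∃ G ∈ T.powerset, lam ≤ G.sum w
  · -- pick minimal-sum then minimal-card group
    set 𝒜 := T.powerset.filter (fun G => lam ≤ G.sum w) with h𝒜
    have hAne : 𝒜.Nonempty := by
      obtain ⟨G, hG1, hG2⟩ := hA
      exact ⟨G, by simp [h𝒜, Finset.mem_filter, hG1, hG2]⟩
    obtain ⟨G₁, hG₁, hmin₁⟩ := 𝒜.exists_min_image (fun G => G.sum w) hAne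
    set 𝒜' := 𝒜.filter (fun G => G.sum w ≤ G₁.sum w) with h𝒜'
    have hAne' : 𝒜'.Nonempty := ⟨G₁, by simp [h𝒜', hG₁]⟩
    obtain ⟨G, hG, hminc⟩ := 𝒜'.exists_min_image (fun G => G.card) hAne'
    rw [h𝒜', Finset.mem_filter] at hG
    have hGA : G ∈ 𝒜 := hG.1
    rw [h𝒜, Finset.mem_filter, Finset.mem_powerset] at hGA
    have hGT : G ⊆ T := hGA.1
    have hGsum : lam ≤ G.sum w := hGA.2
    have hGne : G.Nonempty := by
      rcases Finset.eq_empty_or_nonempty G with h | h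
      · exfalso; rw [h] at hGsum; simp at hGsum; linarith
      · exact h
    -- minimality: erasing any element drops below lam
    have herase : ∀ y ∈ G, (G.erase y).sum w < lam := by
      intro y hy
      by_contra hle
      push_neg at hle
      have hmem : G.erase y ∈ 𝒜 := by
        rw [h𝒜, Finset.mem_filter, Finset.mem_powerset]
        exact ⟨(Finset.erase_subset _ _).trans hGT, hle⟩
      have h1 : G₁.sum w ≤ (G.erase y).sum w := hmin₁ _ hmem
      have h2 : (G.erase y).sum w = G.sum w - w y := Finset.sum_erase_eq_sub hy
      have hy0 : 0 ≤ w y := hw y (hGT hy)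
      have hyz : w y = 0 := by
        have := hG.2
        linarith [h1, hG.2]
      have hmem' : G.erase y ∈ 𝒜' := by
        rw [h𝒜', Finset.mem_filter]
        exact ⟨hmem, by rw [h2, hyz]; simpa using hG.2⟩
      have := hminc _ hmem'
      rw [Finset.card_erase_of_mem hy] at this
      have hcpos : 0 < G.card := Finset.card_pos.2 hGne
      omega
    -- the overshoot bound
    have hbound : 2 ≤ G.card → ((G.card:ℝ) - 1) * G.sum w < lam * G.card := by
      intro hc2
      have hlt : ∑ y ∈ G, (G.sum w - w y) < ∑ y ∈ G, lam := by
        apply Finset.sum_lt_sum_of_nonempty hGne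
        intro y hy
        have := herase y hy
        rw [Finset.sum_erase_eq_sub hy] at this
        exact this
      have hL : ∑ y ∈ G, (G.sum w - w y) = (G.card:ℝ) * G.sum w - G.sum w := by
        rw [Finset.sum_sub_distrib, Finset.sum_const, nsmul_eq_mul]
      have hR : ∑ _y ∈ G, lam = (G.card:ℝ) * lam := by
        rw [Finset.sum_const, nsmul_eq_mul]
      rw [hL, hR] at hlt
      nlinarith [hlt]
    -- recurse
    have hss : T \ G ⊂ T := Finset.sdiff_ssubset hGT hGne
    obtain ⟨gs', lf', hsub', hpw', hlfd', hun', hne', hge', hlt', hlf'⟩ :=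
      ih (T \ G) hss (fun j hj => hw j (Finset.sdiff_subset hj))
    refine ⟨G :: gs', lf', ?_, ?_, ?_, ?_, ?_, ?_, ?_, hlf'⟩
    · intro G'' hG''
      rcases List.mem_cons.1 hG'' with h | h
      · exact h ▸ hGT
      · exact (hsub' G'' h).trans Finset.sdiff_subset
    · rw [List.pairwise_cons]
      refine ⟨fun G'' hG'' => ?_, hpw'⟩
      have := hsub' G'' hG''
      rw [Finset.disjoint_right]
      intro a ha
      exact fun haG => (Finset.mem_sdiff.1 (this ha)).2 haG
    · intro G'' hG''
      rcases List.mem_cons.1 hG'' with h | h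
      · subst h
        have hlfsub : lf' ⊆ T \ G'' := by
          rw [← hun']; exact Finset.subset_union_left
        rw [Finset.disjoint_left]
        intro a ha
        exact (Finset.mem_sdiff.1 (hlfsub ha)).2
      · exact hlfd' G'' h
    · rw [U_cons, ← Finset.union_assoc, Finset.union_comm lf' G, Finset.union_assoc,
        hun', Finset.union_sdiff_of_subset hGT]
    · intro G'' hG''
      rcases List.mem_cons.1 hG'' with h | h
      · exact h ▸ hGne
      · exact hne' G'' h
    · intro G'' hG''
      rcases List.mem_cons.1 hG'' with h | h
      · exact h ▸ hGsum
      · exact hge' G'' h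
    · intro G'' hG''
      rcases List.mem_cons.1 hG'' with h | h
      · exact h ▸ hbound
      · exact hlt' G'' h
  · push_neg at hA
    refine ⟨[], T, by simp, by simp, by simp, by simp [U], by simp, by simp, by simp, ?_⟩
    exact hA T (Finset.mem_powerset.2 (subset_refl T))


lemma mapb_sum (Λ : ℝ) (gs : List (Finset ι)) :
    (gs.map fun G => Λ * ((G.card:ℝ) - 1) + (if G.card = 2 then 2 - 3*Λ else 0)).sum
      = Λ * ((gs.map fun G => (G.card:ℝ)).sum - gs.length)
        + (gs.countP (fun G => G.card == 2) : ℝ) * (2 - 3*Λ) := by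
  induction gs with
  | nil => simp
  | cons G gs ih =>
    rw [List.map_cons, List.sum_cons, ih, List.countP_cons, List.map_cons, List.sum_cons,
      List.length_cons]
    by_cases h : G.card = 2
    · simp only [h, if_true, beq_self_eq_true]
      push_cast
      ring
    · have : (G.card == 2) = false := by simp [h]
      simp only [h, if_false, this]
      push_cast
      ring

lemma two_countP_le (gs : List (Finset ι)) :
    2 * gs.countP (fun G => G.card == 2) ≤ (gs.map Finset.card).sum := by
  induction gs with
  | nil => simp
  | cons G gs ih =>
    rw [List.countP_cons, List.map_cons, List.sum_cons]
    by_cases h : G.card = 2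
    · simp only [h, beq_self_eq_true, if_true]
      omega
    · have hf : (G.card == 2) = false := by simp [h]
      simp [hf]
      omega

lemma cast_card_sum (gs : List (Finset ι)) :
    (gs.map fun G => (G.card:ℝ)).sum = ((gs.map Finset.card).sum : ℝ) := by
  induction gs with
  | nil => simp
  | cons G gs ih => simp [ih]



section ACC
variable {ι : Type*} [DecidableEq ι]

lemma map_sub_sum (gs : List (Finset ι)) (a b : Finset ι → ℝ) :
    (gs.map (fun G => a G - b G)).sum = (gs.map a).sum - (gs.map b).sum := by
  induction gs with
  | nil => simp
  | cons G gs ih => simp only [List.map_cons, List.sum_cons, ih]; ring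

lemma accounting (m : ℕ) (hmo : Odd m) (hm3 : 3 ≤ m) (T : Finset ι) (w : ι → ℝ)
    (hw : ∀ j ∈ T, 0 ≤ w j ∧ w j ≤ 1) (hcard : T.card ≤ m + 1)
    (gs : List (Finset ι)) (lf : Finset ι)
    (hsub : ∀ G ∈ gs, G ⊆ T) (hpw : List.Pairwise Disjoint gs)
    (hlfd : ∀ G ∈ gs, Disjoint lf G) (hun : lf ∪ U gs = T)
    (hne : ∀ G ∈ gs, G.Nonempty) (hge : ∀ G ∈ gs, lamr m ≤ G.sum w)
    (hlt : ∀ G ∈ gs, 2 ≤ G.card → ((G.card:ℝ) - 1) * G.sum w < lamr m * G.card)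
    (hlf : lf.sum w < lamr m) :
    lamr m * ((T.card : ℝ) - gs.length - 1) < ∑ j ∈ T, (1 - w j) := by
  have hm1 : 1 ≤ m := by omega
  set Λ := lamr m with hΛ
  have hΛpos : 0 < Λ := lamr_pos hm1
  have hΛ1 : Λ ≤ 1 := lamr_le_one hm1
  have hD : (0:ℝ) < 3 * (m:ℝ) - 1 := denom_pos hm1
  have hmr : (3:ℝ) ≤ (m:ℝ) := by exact_mod_cast hm3
  have hdisj : Disjoint lf (U gs) := disjoint_U hlfd
  have hcardsplit : T.card = lf.card + (gs.map Finset.card).sum := by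
    rw [← hun, Finset.card_union_of_disjoint hdisj, U_card hpw]
  have hdX : ∀ X : Finset ι, ∑ j ∈ X, (1 - w j) = (X.card:ℝ) - X.sum w := by
    intro X
    rw [Finset.sum_sub_distrib, Finset.sum_const, nsmul_eq_mul, mul_one]
  have htotal : ∑ j ∈ T, (1 - w j) = ((lf.card:ℝ) - lf.sum w)
      + (gs.map (fun G => (G.card:ℝ) - G.sum w)).sum := by
    rw [hdX T]
    rw [map_sub_sum gs (fun G => (G.card:ℝ)) (fun G => G.sum w), cast_card_sum]
    have h1 : T.sum w = lf.sum w + (gs.map (fun G => G.sum w)).sum := by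
      rw [← hun, Finset.sum_union hdisj, U_sum hpw]
    have h2 : ((T.card:ℕ):ℝ) = ((lf.card:ℕ):ℝ) + (((gs.map Finset.card).sum:ℕ):ℝ) := by
      exact_mod_cast congrArg (Nat.cast (R := ℝ)) hcardsplit
    rw [h1, h2]
    ring
  -- per-group lower bound on deficit
  have hb : ∀ G ∈ gs,
      Λ * ((G.card:ℝ) - 1) + (if G.card = 2 then 2 - 3*Λ else 0)
        ≤ (G.card:ℝ) - G.sum w := by
    intro G hG
    have hc1 : 1 ≤ G.card := Finset.card_pos.2 (hne G hG)
    have hsumle : G.sum w ≤ (G.card:ℝ) := by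
      have := Finset.sum_le_card_nsmul G w 1 (fun j hj => (hw j (hsub G hG hj)).2)
      simpa [nsmul_eq_mul] using this
    by_cases h2 : G.card = 2
    · have hsum2 : G.sum w < 2*Λ := by
        have h := hlt G hG (by omega)
        rw [h2] at h; push_cast at h; linarith
      rw [if_pos h2, h2]; push_cast; linarith
    · rw [if_neg h2]
      by_cases h1 : G.card = 1
      · rw [h1] at hsumle ⊢; push_cast at hsumle ⊢; linarith
      · have hc3 : 3 ≤ G.card := by omega
        have hc3r : (3:ℝ) ≤ (G.card:ℝ) := by exact_mod_cast hc3
        have hlt3 := hlt G hG (by omega)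
        set c : ℝ := (G.card:ℝ) with hc
        have hcm1 : (0:ℝ) < c - 1 := by linarith
        have key : Λ * ((c-1)^2 + c) ≤ c * (c-1) := by
          rw [hΛ, lamr, div_mul_eq_mul_div, div_le_iff₀ hD]
          have h6 : 6 ≤ c*c - c := by nlinarith
          nlinarith [mul_le_mul_of_nonneg_left h6 (by linarith : (0:ℝ) ≤ (m:ℝ) - 1)]
        nlinarith [hlt3, key, hcm1, mul_pos hcm1 hcm1]
  have hsums : (gs.map fun G =>
      Λ * ((G.card:ℝ) - 1) + (if G.card = 2 then 2 - 3*Λ else 0)).sum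
        ≤ (gs.map (fun G => (G.card:ℝ) - G.sum w)).sum := List.sum_le_sum hb
  rw [mapb_sum, cast_card_sum] at hsums
  set Pn := gs.countP (fun G => G.card == 2) with hPn
  set Cn := (gs.map Finset.card).sum with hCn
  set Lc := lf.card with hLc
  have h2P : 2 * Pn ≤ Cn := two_countP_le gs
  rw [htotal]
  rcases Nat.eq_zero_or_pos Lc with hL0 | hL1
  · -- leftover empty
    have hlfe : lf = ∅ := Finset.card_eq_zero.1 hL0
    have hlfs : lf.sum w = 0 := by rw [hlfe]; simp
    have hTC : T.card = Cn := by omega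
    have hPb : (Pn:ℝ) * (3*Λ - 2) < Λ := by
      rw [three_lamr_sub_two hm1, hΛ, lamr, ← mul_div_assoc, div_lt_div_iff₀ hD hD]
      have h2Pm : (Pn:ℝ) * 2 ≤ (m:ℝ) + 1 := by
        have : 2 * Pn ≤ m + 1 := by omega
        exact_mod_cast by linarith [this]
      nlinarith [h2Pm, hD, hmr]
    have hcast : ((T.card:ℝ)) = (Cn:ℝ) := by exact_mod_cast congrArg (Nat.cast (R := ℝ)) hTC
    rw [hcast, hL0, hlfs]
    have e1 : Λ * ((Cn:ℝ) - (gs.length:ℝ) - 1)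
        = Λ * ((Cn:ℝ) - (gs.length:ℝ)) - Λ := by ring
    have e2 : (Pn:ℝ) * (2 - 3*Λ) = -((Pn:ℝ) * (3*Λ - 2)) := by ring
    push_cast
    linarith [hsums, hPb, e1, e2]
  · -- leftover nonempty
    have h2Pm : 2 * Pn ≤ m - 1 := by
      have hm2 : m % 2 = 1 := Nat.odd_iff.1 hmo
      omega
    have hPb : (Pn:ℝ) * (3*Λ - 2) ≤ 1 - Λ := by
      rw [three_lamr_sub_two hm1, one_sub_lamr hm1, ← mul_div_assoc, div_le_div_iff₀ hD hD]
      have hcst : ((2*Pn:ℕ):ℝ) ≤ ((m - 1:ℕ):ℝ) := by exact_mod_cast h2Pm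
      have hm1r : (1:ℝ) ≤ (m:ℝ) := by exact_mod_cast hm1
      push_cast [hm1] at hcst
      nlinarith [hcst, hD]
    have hLb : 1 - Λ ≤ (Lc:ℝ) * (1 - Λ) := by
      have h1L : (1:ℝ) ≤ (Lc:ℝ) := by exact_mod_cast hL1
      nlinarith [h1L]
    have hcast : ((T.card:ℝ)) = (Lc:ℝ) + (Cn:ℝ) := by
      exact_mod_cast congrArg (Nat.cast (R := ℝ)) hcardsplit
    rw [hcast]
    have e3 : Λ*((Lc:ℝ)+(Cn:ℝ)-(gs.length:ℝ)-1)
        = Λ*((Cn:ℝ)-(gs.length:ℝ)) + Λ*(Lc:ℝ) - Λ := by ring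
    have e4 : (Lc:ℝ)*(1-Λ) = (Lc:ℝ) - Λ*(Lc:ℝ) := by ring
    have e5 : (Pn:ℝ)*(2-3*Λ) = -((Pn:ℝ)*(3*Λ-2)) := by ring
    linarith [hsums, hPb, hLb, hlf, e3, e4, e5]

end ACC



section LEMA

lemma lemmaA (m n k ℓ : ℕ) (hmo : Odd m) (hm1 : 1 ≤ m) (hn : n ≤ m + 1)
    (hk : 1 ≤ k) (hkl : k + ℓ = n) (w : Fin n → ℝ) (hw : ∀ j, 0 ≤ w j ∧ w j ≤ 1)
    (hd : ∑ j, (1 - w j) ≤ (ℓ:ℝ) * lamr m) :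
    ∃ c : Fin n → Fin k, ∀ i : Fin k,
      lamr m ≤ ∑ j ∈ Finset.univ.filter (fun j => c j = i), w j := by
  classical
  have hΛpos : 0 < lamr m := lamr_pos hm1
  have hΛ1 : lamr m ≤ 1 := lamr_le_one hm1
  have hn0 : 0 < n := by omega
  have hsum_univ : ∑ j, w j = (n:ℝ) - ∑ j, (1 - w j) := by
    rw [Finset.sum_sub_distrib, Finset.sum_const, Finset.card_univ, Fintype.card_fin,
      nsmul_eq_mul, mul_one]
    ring
  rcases eq_or_lt_of_le hk with hk1 | hk2
  · -- k = 1 : one single group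
    refine ⟨fun _ => ⟨0, by omega⟩, fun i => ?_⟩
    have hfe : Finset.univ.filter (fun j : Fin n => (⟨0, by omega⟩ : Fin k) = i)
        = Finset.univ := by
      apply Finset.filter_true_of_mem
      intro x _
      have : k = 1 := hk1.symm
      subst this
      exact Subsingleton.elim _ _
    rw [hfe]
    have hl0 : (0:ℝ) ≤ (ℓ:ℝ) := Nat.cast_nonneg ℓ
    have hcast : (n:ℝ) = (k:ℝ) + (ℓ:ℝ) := by exact_mod_cast hkl.symm
    have hk1r : (k:ℝ) = 1 := by exact_mod_cast hk1.symm
    rw [hsum_univ]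
    nlinarith [hd, hl0, hΛ1, hΛpos]
  · -- k ≥ 2
    by_cases hm1' : m = 1
    · -- then n = 2, k = 2, l = 0, all w j = 1
      have hn2 : n = 2 := by omega
      have hk2' : k = 2 := by omega
      have hΛ1' : lamr m = 1 := by rw [hm1', lamr]; norm_num
      have hdle : ∑ j, (1 - w j) ≤ 0 := by
        have hl0 : ℓ = 0 := by omega
        rw [hl0] at hd; simpa using hd
      have hz : ∀ j, w j = 1 := by
        have hsz : ∑ j, (1 - w j) = 0 := by
          have h0 : (0:ℝ) ≤ ∑ j, (1 - w j) :=
            Finset.sum_nonneg (fun j _ => by linarith [(hw j).2])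
          linarith
        intro j
        have := (Finset.sum_eq_zero_iff_of_nonneg
          (fun j _ => by linarith [(hw j).2] : ∀ j ∈ Finset.univ, 0 ≤ 1 - w j)).1 hsz
            j (Finset.mem_univ j)
        linarith
      have hproof : ∀ j : Fin n, min (j:ℕ) (k-1) < k := fun j => by omega
      refine ⟨fun j => ⟨min (j:ℕ) (k-1), hproof j⟩, fun i => ?_⟩
      have hfe : Finset.univ.filter
          (fun j : Fin n => (⟨min (j:ℕ) (k-1), hproof j⟩ : Fin k) = i)
          = {(⟨(i:ℕ), by omega⟩ : Fin n)} := by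
        ext j
        simp only [Finset.mem_filter, Finset.mem_univ, true_and, Finset.mem_singleton,
          Fin.ext_iff]
        have hj := j.isLt
        have hi := i.isLt
        omega
      rw [hfe, Finset.sum_singleton, hz, hΛ1']
    · -- main case : m ≥ 3
      have hm3 : 3 ≤ m := by
        have := Nat.odd_iff.1 hmo; omega
      obtain ⟨gs, lf, hsub, hpw, hlfd, hun, hne, hge, hlt, hlf⟩ :=
        greedy (lamr m) hΛpos w Finset.univ (fun j _ => (hw j).1)
      have hcardT : (Finset.univ : Finset (Fin n)).card = n := by
        rw [Finset.card_univ, Fintype.card_fin]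
      have hacc := accounting m hmo hm3 Finset.univ w (fun j _ => hw j)
        (by rw [hcardT]; omega) gs lf hsub hpw hlfd hun hne hge hlt hlf
      rw [hcardT] at hacc
      have hlt' : lamr m * ((n:ℝ) - gs.length - 1) < lamr m * (ℓ:ℝ) := by
        calc lamr m * ((n:ℝ) - gs.length - 1) < ∑ j, (1 - w j) := hacc
        _ ≤ (ℓ:ℝ) * lamr m := hd
        _ = lamr m * (ℓ:ℝ) := by ring
      have hnAl : (n:ℝ) - gs.length - 1 < (ℓ:ℝ) := (mul_lt_mul_iff_right₀ hΛpos).1 hlt'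
      have hkA : k ≤ gs.length := by
        have : (n:ℝ) < (gs.length:ℝ) + (ℓ:ℝ) + 1 := by linarith
        have hnat : n < gs.length + ℓ + 1 := by exact_mod_cast this
        omega
      -- build the index map
      set p : Fin n → Finset (Fin n) → Bool := fun j G => decide (j ∈ G) with hp
      have htkl : (gs.take (k-1)).length = k - 1 := by
        rw [List.length_take]; omega
      have hgeq : ∀ (a b : ℕ) (ha : a < gs.length) (hb : b < gs.length), a = b →
          gs[a] = gs[b] := by
        intro a b ha hb h; subst h; rfl
      have hcdef : ∀ j : Fin n, min ((gs.take (k-1)).findIdx (p j)) (k-1) < k := by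
        intro j; omega
      refine ⟨fun j => ⟨min ((gs.take (k-1)).findIdx (p j)) (k-1), hcdef j⟩, fun i => ?_⟩
      -- disjointness of distinct groups
      have hdisjget : ∀ (i1 i2 : ℕ) (h1 : i1 < gs.length) (h2 : i2 < gs.length),
          i1 ≠ i2 → Disjoint (gs[i1]) (gs[i2]) := by
        intro i1 i2 h1 h2 hne12
        rcases Nat.lt_or_ge i1 i2 with h | h
        · exact List.pairwise_iff_get.1 hpw ⟨i1, h1⟩ ⟨i2, h2⟩ h
        · exact (List.pairwise_iff_get.1 hpw ⟨i2, h2⟩ ⟨i1, h1⟩ (Fin.mk_lt_mk.2 (by omega))).symm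
      -- characterization of findIdx for members of group i0 < k-1
      have hfind : ∀ (i0 : ℕ) (hi0 : i0 < gs.length) (j : Fin n),
          j ∈ gs[i0] → (gs.take (k-1)).findIdx (p j) = min i0 (k-1) := by
        intro i0 hi0 j hj
        rcases Nat.lt_or_ge i0 (k-1) with hlt0 | hge0
        · -- i0 < k-1 : findIdx = i0
          rw [min_eq_left (by omega)]
          have hitk : i0 < (gs.take (k-1)).length := by omega
          have hptrue : p j ((gs.take (k-1))[i0]) = true := by
            simp only [List.getElem_take]
            simpa [hp] using hj
          have hfl : (gs.take (k-1)).findIdx (p j) < (gs.take (k-1)).length :=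
            List.findIdx_lt_length_of_exists ⟨(gs.take (k-1))[i0], List.getElem_mem _, hptrue⟩
          by_contra hne0
          rcases Nat.lt_or_ge ((gs.take (k-1)).findIdx (p j)) i0 with hc | hc
          · -- found earlier : contradiction with disjointness
            have hpt : p j ((gs.take (k-1))[(gs.take (k-1)).findIdx (p j)]) = true :=
              List.findIdx_getElem (w := hfl)
            simp only [List.getElem_take, hp, decide_eq_true_eq] at hpt
            have hd2 := hdisjget ((gs.take (k-1)).findIdx (p j)) i0 (by omega) hi0 (by omega)
            exact (Finset.disjoint_left.1 hd2) hpt hj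
          · have : i0 < (gs.take (k-1)).findIdx (p j) := by omega
            have := List.not_of_lt_findIdx this
            rw [hptrue] at this
            simp at this
        · -- i0 ≥ k-1 : j not in any of the first k-1 groups so findIdx = length
          rw [min_eq_right (by omega)]
          have : (gs.take (k-1)).findIdx (p j) = (gs.take (k-1)).length := by
            rw [List.findIdx_eq_length]
            intro x hx
            obtain ⟨i1, hi1, hxe⟩ := List.mem_iff_getElem.1 hx
            simp only [List.getElem_take] at hxe
            have hi1' : i1 < k - 1 := by omega
            subst hxe
            have hd2 := hdisjget i1 i0 (by omega) hi0 (by omega)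
            simp only [hp, decide_eq_false_iff_not]
            exact fun hjx => (Finset.disjoint_left.1 hd2) hjx hj
          omega
      rcases Nat.lt_or_ge (i:ℕ) (k-1) with hik | hik
      · -- groups 0 .. k-2
        have hiA : (i:ℕ) < gs.length := by omega
        have hfe : Finset.univ.filter
            (fun j : Fin n => (⟨min ((gs.take (k-1)).findIdx (p j)) (k-1), hcdef j⟩ : Fin k) = i)
            = gs[(i:ℕ)] := by
          ext j
          simp only [Finset.mem_filter, Finset.mem_univ, true_and, Fin.ext_iff]
          constructor
          · intro h
            -- min (findIdx) (k-1) = i < k-1 hence findIdx = i < (gs.take (k-1)).length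
            have hfi : (gs.take (k-1)).findIdx (p j) = (i:ℕ) := by omega
            have hfl : (gs.take (k-1)).findIdx (p j) < (gs.take (k-1)).length := by omega
            have hpt : p j ((gs.take (k-1))[(gs.take (k-1)).findIdx (p j)]) = true :=
              List.findIdx_getElem (w := hfl)
            simp only [List.getElem_take, hp, decide_eq_true_eq] at hpt
            have heq := hgeq ((gs.take (k-1)).findIdx (p j)) (i:ℕ) (by omega) hiA hfi
            rwa [heq] at hpt
          · intro hj
            have := hfind (i:ℕ) hiA j hj
            omega
        rw [hfe]
        exact hge _ (List.getElem_mem _)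
      · -- last group k-1 : contains group gs[k-1] plus junk
        have hik' : (i:ℕ) = k-1 := by omega
        have hiA : k - 1 < gs.length := by omega
        have hsubset : gs[k-1] ⊆ Finset.univ.filter
            (fun j : Fin n => (⟨min ((gs.take (k-1)).findIdx (p j)) (k-1), hcdef j⟩ : Fin k) = i) := by
          intro j hj
          simp only [Finset.mem_filter, Finset.mem_univ, true_and, Fin.ext_iff]
          have := hfind (k-1) hiA j hj
          omega
        calc lamr m ≤ (gs[k-1]).sum w := hge _ (List.getElem_mem _)
        _ ≤ _ := Finset.sum_le_sum_of_subset_of_nonneg hsubset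
              (fun j _ _ => (hw j).1)
end LEMA

section PARTB

lemma oddFloor_facts (n : ℕ) (hn : 2 ≤ n) :
    Odd (oddFloor n) ∧ 1 ≤ oddFloor n ∧ oddFloor n ≤ n ∧ n ≤ oddFloor n + 1 := by
  unfold oddFloor
  rw [Nat.odd_iff]
  split_ifs with h' <;> omega

lemma partB (n : ℕ) (hn : 2 ≤ n) : DensityBalanceProp n (lamr (oddFloor n)) := by
  intro ι inst M v hv S hS k ℓ hk hkl hyp
  obtain ⟨hmo, hm1, hmn, hnm1⟩ := oddFloor_facts n hn
  set m := oddFloor n with hm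
  have hn0 : 0 < n := by omega
  have hvS : ∀ j ∈ S, 0 ≤ v j := fun j hj => hv j (hS hj)
  have hk0 : 0 < k := hk
  have hμ0 : 0 ≤ mms n M v := mms_nonneg hn0 hv
  have hΛpos : 0 < lamr m := lamr_pos hm1
  rcases eq_or_lt_of_le hμ0 with hμz | hμpos
  · rw [← hμz, mul_zero]
    exact mms_nonneg hk0 hvS
  · set μ := mms n M v with hμdef
    obtain ⟨P, hP, hPopt⟩ := exists_opt hn0 hv
    set Q : Fin n → Finset ι := fun j => P j ∩ S with hQ
    have hQsubP : ∀ j, Q j ⊆ P j := fun j => Finset.inter_subset_left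
    have hQS : ∀ j, Q j ⊆ S := fun j => Finset.inter_subset_right
    have hPM : ∀ j, P j ⊆ M := fun j => subset_of_partition hP j
    have hQP : IsPartition n S Q := by
      constructor
      · intro i j hij
        exact (hP.1 i j hij).mono (hQsubP i) (hQsubP j)
      · ext x
        simp only [Finset.mem_biUnion, Finset.mem_univ, true_and, hQ, Finset.mem_inter]
        constructor
        · rintro ⟨j, hxj, hxS⟩; exact hxS
        · intro hxS
          have hxM : x ∈ M := hS hxS
          rw [← hP.2] at hxM
          simp only [Finset.mem_biUnion, Finset.mem_univ, true_and] at hxM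
          obtain ⟨j, hj⟩ := hxM
          exact ⟨j, hj, hxS⟩
    have hQv : ∀ j, 0 ≤ (Q j).sum v :=
      fun j => Finset.sum_nonneg (fun x hx => hvS x (hQS j hx))
    have hPv : ∀ j, (Q j).sum v ≤ (P j).sum v := fun j =>
      Finset.sum_le_sum_of_subset_of_nonneg (hQsubP j)
        (fun x hx _ => hv x (hPM j hx))
    set w : Fin n → ℝ := fun j => min ((Q j).sum v / μ) 1 with hwdef
    have hw : ∀ j, 0 ≤ w j ∧ w j ≤ 1 := by
      intro j
      constructor
      · exact le_min (div_nonneg (hQv j) hμ0) zero_le_one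
      · exact min_le_right _ _
    have hvQle : ∀ j, μ * w j ≤ (Q j).sum v := by
      intro j
      have h1 : μ * w j ≤ μ * ((Q j).sum v / μ) :=
        mul_le_mul_of_nonneg_left (min_le_left _ _) hμ0
      rwa [mul_div_cancel₀ _ (ne_of_gt hμpos)] at h1
    have hdef : ∀ j, 1 - w j ≤ ((P j).sum v - (Q j).sum v) / μ := by
      intro j
      rw [le_div_iff₀ hμpos]
      rcases min_cases ((Q j).sum v / μ) 1 with ⟨he, hle⟩ | ⟨he, hle⟩
      · rw [hwdef]
        simp only [he]
        rw [sub_mul, one_mul, div_mul_cancel₀ _ (ne_of_gt hμpos)]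
        have := hPopt j
        linarith
      · rw [hwdef]
        simp only [he]
        have := hPv j
        nlinarith [hμpos]
    have hsum : ∑ j, (1 - w j) ≤ (ℓ:ℝ) * lamr m := by
      have h1 : ∑ j, (1 - w j) ≤ ∑ j, ((P j).sum v - (Q j).sum v) / μ :=
        Finset.sum_le_sum (fun j _ => hdef j)
      have hPMv : ∑ j, (P j).sum v = M.sum v := by
        rw [← hP.2]
        exact (Finset.sum_biUnion (fun i _ j _ hij => hP.1 i j hij)).symm
      have hQSv : ∑ j, (Q j).sum v = S.sum v := by
        rw [← hQP.2]
        exact (Finset.sum_biUnion (fun i _ j _ hij => hQP.1 i j hij)).symm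
      have hMS : (M \ S).sum v = M.sum v - S.sum v := by
        have := Finset.sum_sdiff (f := v) hS
        linarith
      have h2 : ∑ j, ((P j).sum v - (Q j).sum v) / μ = (M \ S).sum v / μ := by
        rw [← Finset.sum_div, Finset.sum_sub_distrib, hPMv, hQSv, hMS]
      have h3 : (M \ S).sum v / μ ≤ (ℓ:ℝ) * lamr m := by
        rw [div_le_iff₀ hμpos]
        exact hyp
      linarith
    obtain ⟨c, hc⟩ := lemmaA m n k ℓ hmo hm1 hnm1 hk hkl w hw hsum
    set R : Fin k → Finset ι :=
      fun i => (Finset.univ.filter (fun j => c j = i)).biUnion Q with hR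
    have hRP : IsPartition k S R := by
      constructor
      · intro i i' hii'
        rw [Finset.disjoint_left]
        intro x hx hx'
        simp only [hR, Finset.mem_biUnion, Finset.mem_filter, Finset.mem_univ,
          true_and] at hx hx'
        obtain ⟨j, hcj, hxj⟩ := hx
        obtain ⟨j', hcj', hxj'⟩ := hx'
        have hjj' : j ≠ j' := by
          intro h; subst h; exact hii' (hcj ▸ hcj'.symm ▸ rfl)
        exact (Finset.disjoint_left.1 (hQP.1 j j' hjj')) hxj hxj'
      · ext x
        simp only [hR, Finset.mem_biUnion, Finset.mem_univ, true_and, Finset.mem_filter]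
        constructor
        · rintro ⟨i, j, ⟨_, _⟩, hxj⟩
          have : x ∈ Finset.univ.biUnion Q := by
            simp only [Finset.mem_biUnion, Finset.mem_univ, true_and]
            exact ⟨j, hxj⟩
          rwa [hQP.2] at this
        · intro hxS
          have : x ∈ Finset.univ.biUnion Q := by rw [hQP.2]; exact hxS
          simp only [Finset.mem_biUnion, Finset.mem_univ, true_and] at this
          obtain ⟨j, hxj⟩ := this
          exact ⟨c j, j, rfl, hxj⟩
    apply le_mms hk0 hvS hRP
    intro i
    have hRsum : (R i).sum v = ∑ j ∈ Finset.univ.filter (fun j => c j = i), (Q j).sum v := by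
      rw [hR]
      exact Finset.sum_biUnion (fun a _ b _ hab => hQP.1 a b hab)
    rw [hRsum]
    calc lamr m * μ = μ * lamr m := by ring
    _ ≤ μ * ∑ j ∈ Finset.univ.filter (fun j => c j = i), w j :=
        mul_le_mul_of_nonneg_left (hc i) hμ0
    _ = ∑ j ∈ Finset.univ.filter (fun j => c j = i), μ * w j := Finset.mul_sum _ _ _
    _ ≤ ∑ j ∈ Finset.univ.filter (fun j => c j = i), (Q j).sum v :=
        Finset.sum_le_sum (fun j _ => hvQle j)

end PARTB



section PARTC

lemma partC (n : ℕ) (hn : 2 ≤ n) (lam' : ℝ) (h : DensityBalanceProp n lam') :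
    lam' ≤ lamr (oddFloor n) := by
  by_contra hgt
  push_neg at hgt
  obtain ⟨hmo, hm1, hmn, hnm1⟩ := oddFloor_facts n hn
  set m := oddFloor n with hm
  set Λ := lamr m with hΛdef
  have hΛpos : 0 < Λ := lamr_pos hm1
  have hΛ1 : Λ ≤ 1 := lamr_le_one hm1
  have hmodd : m % 2 = 1 := Nat.odd_iff.1 hmo
  set ℓ : ℕ := (m-1)/2 with hldef
  have h2l : 2 * ℓ = m - 1 := by omega
  set k : ℕ := n - ℓ with hkdef
  have hkl : k + ℓ = n := by omega
  have hk1 : 1 ≤ k := by omega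
  have hk0 : 0 < k := hk1
  have hn0 : 0 < n := by omega
  -- the instance
  set v : ℕ → ℝ := fun x => if x < n - m then 1 else if x < n then Λ else 1 - Λ with hvdef
  set M : Finset ℕ := Finset.range (n+m) with hMdef
  set S : Finset ℕ := Finset.range n with hSdef
  have hv : ∀ j ∈ M, 0 ≤ v j := by
    intro j _
    simp only [hvdef]
    split_ifs <;> linarith
  have hSM : S ⊆ M := by
    rw [hSdef, hMdef]
    exact Finset.range_subset_range.2 (by omega)
  -- optimal partition of M
  set P : Fin n → Finset ℕ :=
    fun j => if (j:ℕ) < n - m then {(j:ℕ)} else {(j:ℕ), (j:ℕ)+m} with hPdef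
  have key : ∀ (a : Fin n) (x : ℕ), x ∈ P a →
      x = (a:ℕ) ∨ (n - m ≤ (a:ℕ) ∧ x = (a:ℕ) + m) := by
    intro a x hx
    simp only [hPdef] at hx
    split_ifs at hx with h1
    · left; simpa using hx
    · rcases Finset.mem_insert.1 hx with h2 | h2
      · left; exact h2
      · right; exact ⟨by omega, by simpa using h2⟩
  have hPart : IsPartition n M P := by
    constructor
    · intro i j hij
      have hi := i.isLt
      have hj := j.isLt
      have hvij : (i:ℕ) ≠ (j:ℕ) := fun hh => hij (Fin.ext hh)
      rw [Finset.disjoint_left]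
      intro x hx hx'
      rcases key i x hx with h1 | ⟨h1a, h1⟩ <;> rcases key j x hx' with h2 | ⟨h2a, h2⟩ <;>
        omega
    · ext x
      simp only [Finset.mem_biUnion, Finset.mem_univ, true_and, hMdef, Finset.mem_range]
      constructor
      · rintro ⟨j, hj⟩
        have := j.isLt
        rcases key j x hj with h1 | ⟨h1a, h1⟩ <;> omega
      · intro hx
        rcases Nat.lt_or_ge x n with hxn | hxn
        · refine ⟨⟨x, hxn⟩, ?_⟩
          show x ∈ if x < n - m then ({x} : Finset ℕ) else {x, x+m}
          split_ifs
          · simp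
          · simp
        · refine ⟨⟨x - m, by omega⟩, ?_⟩
          show x ∈ if x - m < n - m then ({x - m} : Finset ℕ) else {x - m, (x - m)+m}
          have hge : ¬ (x - m < n - m) := by omega
          have hxm : (x - m) + m = x := by omega
          rw [if_neg hge, hxm]
          exact Finset.mem_insert.2 (Or.inr (Finset.mem_singleton_self x))
  have hsum1 : ∀ j, (P j).sum v = 1 := by
    intro j
    have hjlt := j.isLt
    show (if (j:ℕ) < n - m then ({(j:ℕ)} : Finset ℕ) else {(j:ℕ), (j:ℕ)+m}).sum v = 1
    split_ifs with h1
    · rw [Finset.sum_singleton]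
      simp only [hvdef]
      rw [if_pos h1]
    · have hne : (j:ℕ) ≠ (j:ℕ) + m := by omega
      rw [Finset.sum_pair hne]
      simp only [hvdef]
      rw [if_neg h1, if_pos hjlt, if_neg (by omega : ¬ (j:ℕ) + m < n - m),
        if_neg (by omega : ¬ (j:ℕ) + m < n)]
      ring
  have hMv : M.sum v = (n:ℝ) := by
    rw [← hPart.2, Finset.sum_biUnion (fun i _ j _ hij => hPart.1 i j hij)]
    rw [Finset.sum_congr rfl (fun j _ => hsum1 j)]
    simp
  have hmms1 : mms n M v = 1 := by
    apply le_antisymm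
    · apply mms_le hn0
      intro P' hP'
      by_contra hc
      push_neg at hc
      have he : ∑ j, (P' j).sum v = (n:ℝ) := by
        rw [← Finset.sum_biUnion (fun i _ j _ hij => hP'.1 i j hij), hP'.2, hMv]
      have hgt2 : (n:ℝ) < ∑ j, (P' j).sum v := by
        calc (n:ℝ) = ∑ _j : Fin n, (1:ℝ) := by simp
        _ < ∑ j, (P' j).sum v :=
              Finset.sum_lt_sum_of_nonempty ⟨⟨0, hn0⟩, Finset.mem_univ _⟩
                (fun j _ => hc j)
      linarith
    · exact le_mms hn0 hv hPart (fun j => le_of_eq (hsum1 j).symm)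
  have hMSset : M \ S = Finset.Ico n (n+m) := by
    ext x
    simp only [Finset.mem_sdiff, hMdef, hSdef, Finset.mem_range, Finset.mem_Ico]
    omega
  have hMSe : (M \ S).sum v = (m:ℝ) * (1 - Λ) := by
    rw [hMSset]
    have hconst : ∀ x ∈ Finset.Ico n (n+m), v x = 1 - Λ := by
      intro x hx
      rw [Finset.mem_Ico] at hx
      simp only [hvdef]
      rw [if_neg (by omega : ¬ x < n - m), if_neg (by omega : ¬ x < n)]
    have hcc : n + m - n = m := by omega
    rw [Finset.sum_congr rfl hconst, Finset.sum_const, Nat.card_Ico, hcc, nsmul_eq_mul]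
  have h2lr : 2 * (ℓ:ℝ) = (m:ℝ) - 1 := by
    have : ((2 * ℓ : ℕ) : ℝ) = ((m - 1 : ℕ) : ℝ) := by exact_mod_cast h2l
    push_cast [hm1] at this
    linarith
  have hIcoL : (m:ℝ) * (1 - Λ) = (ℓ:ℝ) * Λ := by
    have hD := denom_pos hm1
    have hDne : (3*(m:ℝ)-1) ≠ 0 := ne_of_gt hD
    have hnum : (m:ℝ) * ((m:ℝ)-1) = (ℓ:ℝ) * (2*(m:ℝ)) := by linear_combination (-(m:ℝ)) * h2lr
    rw [hΛdef, one_sub_lamr hm1, lamr, ← mul_div_assoc, ← mul_div_assoc, hnum]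
  -- upper bound on mms k S v
  have hup : mms k S v ≤ Λ := by
    apply mms_le hk0
    intro R hR
    by_contra hc
    push_neg at hc
    set A : Finset ℕ := Finset.range (n-m) with hA
    set B : Finset ℕ := Finset.Ico (n-m) n with hB
    have hRS : ∀ i, R i ⊆ S := fun i => subset_of_partition hR i
    have hab : ∀ i, (R i).sum v
        = ((R i ∩ A).card : ℝ) + Λ * ((R i ∩ B).card : ℝ) := by
      intro i
      have hdecomp : R i = (R i ∩ A) ∪ (R i ∩ B) := by
        ext x
        simp only [Finset.mem_union, Finset.mem_inter, hA, hB, Finset.mem_range,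
          Finset.mem_Ico]
        constructor
        · intro hx
          have hxS : x ∈ S := hRS i hx
          rw [hSdef, Finset.mem_range] at hxS
          rcases Nat.lt_or_ge x (n-m) with hh | hh
          · exact Or.inl ⟨hx, hh⟩
          · exact Or.inr ⟨hx, hh, hxS⟩
        · rintro (⟨hx, _⟩ | ⟨hx, _⟩) <;> exact hx
      have hdisj : Disjoint (R i ∩ A) (R i ∩ B) := by
        rw [Finset.disjoint_left]
        intro x hx hx'
        simp only [Finset.mem_inter, hA, hB, Finset.mem_range, Finset.mem_Ico] at hx hx'
        omega
      have hc1 : ∀ x ∈ R i ∩ A, v x = 1 := by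
        intro x hx
        simp only [Finset.mem_inter, hA, Finset.mem_range] at hx
        simp only [hvdef]
        rw [if_pos hx.2]
      have hc2 : ∀ x ∈ R i ∩ B, v x = Λ := by
        intro x hx
        simp only [Finset.mem_inter, hB, Finset.mem_Ico] at hx
        simp only [hvdef]
        rw [if_neg (by omega : ¬ x < n - m), if_pos hx.2.2]
      have e1 : (R i ∩ A).sum v = ((R i ∩ A).card : ℝ) := by
        rw [Finset.sum_congr rfl hc1, Finset.sum_const, nsmul_eq_mul, mul_one]
      have e2 : (R i ∩ B).sum v = Λ * ((R i ∩ B).card : ℝ) := by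
        rw [Finset.sum_congr rfl hc2, Finset.sum_const, nsmul_eq_mul, mul_comm]
      have hsum' : (R i).sum v = (R i ∩ A).sum v + (R i ∩ B).sum v := by
        nth_rewrite 1 [hdecomp]
        exact Finset.sum_union hdisj
      rw [hsum', e1, e2]
    have h2cd : ∀ i, 2 ≤ 2 * (R i ∩ A).card + (R i ∩ B).card := by
      intro i
      by_contra hcc
      push_neg at hcc
      have hcA0 : (R i ∩ A).card = 0 := by omega
      have hcB1 : (R i ∩ B).card ≤ 1 := by omega
      have hBr : ((R i ∩ B).card : ℝ) ≤ 1 := by exact_mod_cast hcB1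
      have := hc i
      rw [hab i, hcA0] at this
      push_cast at this
      nlinarith [hΛpos, hBr, this]
    have hbiA : Finset.univ.biUnion (fun i => R i ∩ A) = A := by
      ext x
      simp only [Finset.mem_biUnion, Finset.mem_univ, true_and, Finset.mem_inter]
      constructor
      · rintro ⟨i, _, hx⟩; exact hx
      · intro hx
        have hxS : x ∈ S := by
          rw [hSdef, Finset.mem_range]
          rw [hA, Finset.mem_range] at hx
          omega
        rw [← hR.2] at hxS
        simp only [Finset.mem_biUnion, Finset.mem_univ, true_and] at hxS
        obtain ⟨i, hi⟩ := hxS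
        exact ⟨i, hi, hx⟩
    have hbiB : Finset.univ.biUnion (fun i => R i ∩ B) = B := by
      ext x
      simp only [Finset.mem_biUnion, Finset.mem_univ, true_and, Finset.mem_inter]
      constructor
      · rintro ⟨i, _, hx⟩; exact hx
      · intro hx
        have hxS : x ∈ S := by
          rw [hSdef, Finset.mem_range]
          rw [hB, Finset.mem_Ico] at hx
          omega
        rw [← hR.2] at hxS
        simp only [Finset.mem_biUnion, Finset.mem_univ, true_and] at hxS
        obtain ⟨i, hi⟩ := hxS
        exact ⟨i, hi, hx⟩
    have hsumA : ∑ i, (R i ∩ A).card = n - m := by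
      rw [← Finset.card_biUnion (fun i _ j _ hij =>
        (hR.1 i j hij).mono Finset.inter_subset_left Finset.inter_subset_left), hbiA,
        hA, Finset.card_range]
    have hsumB : ∑ i, (R i ∩ B).card = m := by
      rw [← Finset.card_biUnion (fun i _ j _ hij =>
        (hR.1 i j hij).mono Finset.inter_subset_left Finset.inter_subset_left), hbiB,
        hB, Nat.card_Ico]
      omega
    have htot : 2 * k ≤ 2 * (n - m) + m := by
      calc 2 * k = ∑ _i : Fin k, 2 := by
            rw [Finset.sum_const, Finset.card_univ, Fintype.card_fin, smul_eq_mul,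
              mul_comm]
      _ ≤ ∑ i, (2 * (R i ∩ A).card + (R i ∩ B).card) :=
            Finset.sum_le_sum (fun i _ => h2cd i)
      _ = 2 * (n - m) + m := by
            rw [Finset.sum_add_distrib, ← Finset.mul_sum, hsumA, hsumB]
    omega
  -- apply the density balance property to the instance
  have hyp : (M \ S).sum v ≤ (ℓ:ℝ) * lam' * mms n M v := by
    rw [hmms1, mul_one, hMSe, hIcoL]
    have : (0:ℝ) ≤ (ℓ:ℝ) := Nat.cast_nonneg ℓ
    nlinarith [hgt]
  have happ := h ℕ M v hv S hSM k ℓ hk1 hkl hyp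
  rw [hmms1, mul_one] at happ
  linarith [happ, hup, hgt]

end PARTC

end DBaux

/-- Density Balance Lemma: for `n ≥ 2`,
`λ_n = 2⌊n⌋_odd / (3⌊n⌋_odd − 1)` is (a) greater than `2/3` and (b), (c) the
greatest real number satisfying the density-balance property. -/
theorem density_balance (n : ℕ) (hn : 2 ≤ n) :
    (2 / 3 : ℝ) < 2 * (oddFloor n : ℝ) / (3 * (oddFloor n : ℝ) - 1) ∧
      IsGreatest {lam : ℝ | DensityBalanceProp n lam}
        (2 * (oddFloor n : ℝ) / (3 * (oddFloor n : ℝ) - 1)) := by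
  obtain ⟨hmo, hm1, hmn, hnm1⟩ := DBaux.oddFloor_facts n hn
  refine ⟨DBaux.two_thirds_lt_lamr hm1, ?_, ?_⟩
  · exact DBaux.partB n hn
  · intro lam' hmem
    exact DBaux.partC n hn lam' hmem
end

section
/- Let G be a finite bipartite graph with vertex parts X and Y, and let B be a maximum matching of G that does not saturate X. Let X_u ⊆ X be the set of X-vertices left unmatched by B, and let X^+ be the union of X_u with the set of all X-vertices reachable from X_u by paths that alternate between non-matching edges (traversed from X to Y) and matching edges of B (traversed from Y to X). Then: (1) every neighbor of X^+ is matched by B, and the X-endpoint of the matching edge at any vertex of Γ(X^+) lies in X^+, so that |X^+ ∩ X_m| = |Γ(X^+)| and |X^+| = |X_u| + |Γ(X^+)| > |Γ(X^+)|, where Γ(X^+) ⊆ Y denotes the set of neighbors of X^+ in G and X_m = X \ X_u; (2) there are no edges of G between X^+ and Y \ Γ(X^+); (3) the restriction of B to X \ X^+ is a perfect matching between X \ X^+ and a subset of Y \ Γ(X^+). -/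
/-- `B` is a matching of the bipartite graph on parts `X`, `Y` with adjacency
relation `E`: a set of pairwise vertex-disjoint edges. -/
def IsMatching {X Y : Type} (E : X → Y → Prop) (B : Finset (X × Y)) : Prop :=
  (∀ p ∈ B, E p.1 p.2) ∧
    (∀ p ∈ B, ∀ q ∈ B, p.1 = q.1 → p = q) ∧
    (∀ p ∈ B, ∀ q ∈ B, p.2 = q.2 → p = q)

private lemma chain_imp_mem {α : Type} {R S : α → α → Prop} :
    ∀ {l : List α} {a : α}, List.Chain R a l →
      (∀ c ∈ a :: l, ∀ d ∈ a :: l, R c d → S c d) → List.Chain S a l := by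
  intro l
  induction l with
  | nil => intro a _ _; exact List.Chain.nil
  | cons b t ih =>
    intro a h hcd
    cases h with
    | cons_cons hab ht =>
      refine List.Chain.cons (hcd a (by simp) b (by simp) hab) (ih ht ?_)
      intro c hc d hd hr
      exact hcd c (by simp only [List.mem_cons] at hc ⊢; tauto)
        d (by simp only [List.mem_cons] at hd ⊢; tauto) hr

private lemma chain_last_step {α : Type} {R : α → α → Prop} :
    ∀ (l : List α) (a x : α), List.Chain R a (l ++ [x]) →
      List.Chain R a l ∧ R ((a :: l).getLast (List.cons_ne_nil _ _)) x := by
  intro l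
  induction l with
  | nil =>
    intro a x h
    cases h with
    | cons_cons h1 _ => exact ⟨List.Chain.nil, by simpa using h1⟩
  | cons b t ih =>
    intro a x h
    cases h with
    | cons_cons h1 h2 =>
      obtain ⟨hc, hr⟩ := ih b x h2
      exact ⟨List.Chain.cons h1 hc, by simpa [List.getLast_cons_cons] using hr⟩

private lemma aug {X Y : Type} [DecidableEq X] [DecidableEq Y]
    (E : X → Y → Prop) (B : Finset (X × Y))
    (hmax : ∀ B' : Finset (X × Y), IsMatching E B' → B'.card ≤ B.card) :
    ∀ (n : ℕ) (l : List X), l.length ≤ n → ∀ C : Finset (X × Y),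
      IsMatching E C → C.card = B.card →
      ∀ u x y, List.Chain (fun a b => ∃ z, E a z ∧ (a, z) ∉ C ∧ (b, z) ∈ C) u l →
        (u :: l).getLast (List.cons_ne_nil _ _) = x →
        (∀ z, (u, z) ∉ C) → E x y → (∀ x', (x', y) ∉ C) → False := by
  intro n
  induction n with
  | zero =>
    intro l hl C hC hcard u x y hchain hlast hu hxy hy
    have hl0 : l = [] := List.length_eq_zero_iff.mp (Nat.le_zero.mp hl)
    subst hl0
    have hux : u = x := by simpa using hlast
    subst hux
    -- augment: insert (u,y) C
    have hnot : (u, y) ∉ C := hu y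
    have hM : IsMatching E (insert (u, y) C) := by
      obtain ⟨hCE, hC1, hC2⟩ := hC
      refine ⟨?_, ?_, ?_⟩
      · intro p hp
        rcases Finset.mem_insert.mp hp with h | h
        · subst h; exact hxy
        · exact hCE p h
      · rintro ⟨p1, p2⟩ hp ⟨q1, q2⟩ hq h1
        obtain rfl : p1 = q1 := h1
        rcases Finset.mem_insert.mp hp with hp | hp <;>
          rcases Finset.mem_insert.mp hq with hq | hq
        · rw [hp, hq]
        · simp only [Prod.mk.injEq] at hp
          exact absurd hq (by rw [hp.1]; exact hu q2)
        · simp only [Prod.mk.injEq] at hq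
          exact absurd hp (by rw [hq.1]; exact hu p2)
        · exact hC1 _ hp _ hq rfl
      · rintro ⟨p1, p2⟩ hp ⟨q1, q2⟩ hq h2
        obtain rfl : p2 = q2 := h2
        rcases Finset.mem_insert.mp hp with hp | hp <;>
          rcases Finset.mem_insert.mp hq with hq | hq
        · rw [hp, hq]
        · simp only [Prod.mk.injEq] at hp
          exact absurd hq (by rw [hp.2]; exact hy q1)
        · simp only [Prod.mk.injEq] at hq
          exact absurd hp (by rw [hq.2]; exact hy p1)
        · exact hC2 _ hp _ hq rfl
    have := hmax _ hM
    rw [Finset.card_insert_of_notMem hnot, hcard] at this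
    omega
  | succ n ih =>
    intro l hl C hC hcard u x y hchain hlast hu hxy hy
    by_cases hxunm : ∀ z, (x, z) ∉ C
    · exact ih [] (by simp) C hC hcard x x y List.Chain.nil rfl hxunm hxy hy
    · push_neg at hxunm
      obtain ⟨y0, hxy0⟩ := hxunm
      have hxu : x ≠ u := fun h => hu y0 (h ▸ hxy0)
      have hlne : l ≠ [] := by
        rintro rfl
        exact hxu (by simpa using hlast.symm)
      have hlast' : l.getLast hlne = x := by
        rw [List.getLast_cons hlne] at hlast; exact hlast
      have hldecomp : l.dropLast ++ [x] = l := by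
        rw [← hlast']; exact List.dropLast_append_getLast hlne
      by_cases hmem : x ∈ u :: l.dropLast
      · -- x appears earlier; take a shorter chain to x
        rcases List.mem_cons.mp hmem with h | h
        · exact hxu h
        · obtain ⟨s, t, hst⟩ := List.append_of_mem h
          have hl2 : l = s ++ x :: (t ++ [x]) := by
            conv_lhs => rw [← hldecomp, hst]
            simp
          subst hl2
          have hchain' := (List.isChain_cons_split.mp hchain).1
          have hlen : (s ++ [x]).length ≤ n := by
            simp only [List.length_append, List.length_cons, List.length_singleton,
              List.length_nil] at hl ⊢
            omega
          exact ih (s ++ [x]) hlen C hC hcard u x y hchain'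
            (List.getLast_append_singleton (u :: s))
            hu hxy hy
      · -- flip the last edge
        have hchain2 : List.Chain (fun a b => ∃ z, E a z ∧ (a, z) ∉ C ∧ (b, z) ∈ C) u
            (l.dropLast ++ [x]) := by rw [hldecomp]; exact hchain
        obtain ⟨hchainpre, hstep⟩ := chain_last_step _ _ _ hchain2
        obtain ⟨z0, hEaz, hanotC, hxzC⟩ := hstep
        set a := (u :: l.dropLast).getLast (List.cons_ne_nil _ _) with ha
        obtain ⟨hCE, hC1, hC2⟩ := hC
        have hyz0 : y ≠ z0 := fun h => hy x (h ▸ hxzC)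
        have hxyC : (x, y) ∉ C := fun h => hy x h
        set C' : Finset (X × Y) := insert (x, y) (C.erase (x, z0)) with hC'
        have hxyC'e : (x, y) ∉ C.erase (x, z0) := fun h => hxyC (Finset.mem_of_mem_erase h)
        have hmemC' : ∀ p, p ∈ C' → p = (x, y) ∨ (p ∈ C ∧ p ≠ (x, z0)) := by
          intro p hp
          rcases Finset.mem_insert.mp hp with h | h
          · exact Or.inl h
          · exact Or.inr ⟨Finset.mem_of_mem_erase h, Finset.ne_of_mem_erase h⟩
        have hC'M : IsMatching E C' := by
          refine ⟨?_, ?_, ?_⟩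
          · intro p hp
            rcases hmemC' p hp with h | ⟨h, _⟩
            · subst h; exact hxy
            · exact hCE p h
          · rintro ⟨p1, p2⟩ hp ⟨q1, q2⟩ hq h1
            obtain rfl : p1 = q1 := h1
            rcases hmemC' _ hp with hp' | ⟨hp', hpne⟩ <;>
              rcases hmemC' _ hq with hq' | ⟨hq', hqne⟩
            · rw [hp', hq']
            · exfalso
              simp only [Prod.mk.injEq] at hp'
              obtain ⟨rfl, rfl⟩ := hp'
              exact hqne (hC1 _ hq' (p1, z0) hxzC rfl)
            · exfalso
              simp only [Prod.mk.injEq] at hq'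
              obtain ⟨rfl, rfl⟩ := hq'
              exact hpne (hC1 _ hp' (p1, z0) hxzC rfl)
            · exact hC1 _ hp' _ hq' rfl
          · rintro ⟨p1, p2⟩ hp ⟨q1, q2⟩ hq h2
            obtain rfl : p2 = q2 := h2
            rcases hmemC' _ hp with hp' | ⟨hp', hpne⟩ <;>
              rcases hmemC' _ hq with hq' | ⟨hq', hqne⟩
            · rw [hp', hq']
            · exfalso
              simp only [Prod.mk.injEq] at hp'
              obtain ⟨rfl, rfl⟩ := hp'
              exact hy q1 hq'
            · exfalso
              simp only [Prod.mk.injEq] at hq'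
              obtain ⟨rfl, rfl⟩ := hq'
              exact hy p1 hp'
            · exact hC2 _ hp' _ hq' rfl
        have hC'card : C'.card = B.card := by
          rw [hC', Finset.card_insert_of_notMem hxyC'e, Finset.card_erase_of_mem hxzC]
          have : 0 < C.card := Finset.card_pos.mpr ⟨_, hxzC⟩
          omega
        have huxne : u ≠ x := fun h => hxu h.symm
        have hu' : ∀ z, (u, z) ∉ C' := by
          intro z hz
          rcases hmemC' _ hz with h | ⟨h, _⟩
          · exact huxne (congrArg Prod.fst h)
          · exact hu z h
        have hz0' : ∀ x', (x', z0) ∉ C' := by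
          intro x' hx'
          rcases hmemC' _ hx' with h | ⟨h, hne⟩
          · exact hyz0 (congrArg Prod.snd h).symm
          · exact hne (hC2 _ h (x, z0) hxzC rfl)
        have hchain' : List.Chain (fun a b => ∃ z, E a z ∧ (a, z) ∉ C' ∧ (b, z) ∈ C') u
            l.dropLast := by
          refine chain_imp_mem hchainpre ?_
          rintro c hc d hd ⟨z, hz1, hz2, hz3⟩
          have hcx : c ≠ x := fun h => hmem (h ▸ hc)
          have hdx : d ≠ x := fun h => hmem (h ▸ hd)
          refine ⟨z, hz1, ?_, ?_⟩
          · intro hcz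
            rcases hmemC' _ hcz with h | ⟨h, _⟩
            · exact hcx (congrArg Prod.fst h)
            · exact hz2 h
          · exact Finset.mem_insert_of_mem (Finset.mem_erase.mpr ⟨by simp [hdx], hz3⟩)
        have hlen' : l.dropLast.length ≤ n := by
          have h2 : l.dropLast.length + 1 = l.length := by
            conv_rhs => rw [← hldecomp]
            simp
          omega
        exact ih l.dropLast hlen' C' hC'M hC'card u a z0 hchain' rfl hu' hEaz hz0'

/-- for a maximum matching `B` of a finite bipartite graph `(X, Y, E)`
that does not saturate `X`, with `Xu` the unmatched `X`-vertices and `Xplus` the set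
of `X`-vertices reachable from `Xu` by alternating paths, the stated structural
properties hold. -/
theorem alternating_reachable_set_properties {X Y : Type}
    [Fintype X] [Fintype Y] [DecidableEq X] [DecidableEq Y]
    (E : X → Y → Prop) (B : Finset (X × Y))
    (hB : IsMatching E B)
    (hmax : ∀ B' : Finset (X × Y), IsMatching E B' → B'.card ≤ B.card)
    (hunsat : ∃ x : X, ∀ y : Y, (x, y) ∉ B)
    -- the set of X-vertices unmatched by B
    (Xu : Set X) (hXu : Xu = {x : X | ∀ y : Y, (x, y) ∉ B})
    -- alternating step: from x, traverse a non-matching edge (x, y), then the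
    -- matching edge (x', y) of B back to X
    (step : X → X → Prop)
    (hstep : step = fun x x' => ∃ y : Y, E x y ∧ (x, y) ∉ B ∧ (x', y) ∈ B)
    -- Xplus = Xu together with all X-vertices reachable from Xu by alternating paths
    (Xplus : Set X) (hXplus : Xplus = {x : X | ∃ u ∈ Xu, Relation.ReflTransGen step u x})
    -- Γ(Xplus), the set of neighbors of Xplus in Y
    (Γplus : Set Y) (hΓ : Γplus = {y : Y | ∃ x ∈ Xplus, E x y}) :
    -- (1) every neighbor of Xplus is matched by B, via a matching edge whose
    -- X-endpoint lies in Xplus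
    (∀ y ∈ Γplus, ∃ x ∈ Xplus, (x, y) ∈ B) ∧
    (Xplus ∩ {x : X | x ∉ Xu}).ncard = Γplus.ncard ∧
    Xplus.ncard = Xu.ncard + Γplus.ncard ∧
    Γplus.ncard < Xplus.ncard ∧
    -- (2) there are no edges of G between Xplus and Y \ Γ(Xplus)
    (∀ x ∈ Xplus, ∀ y : Y, E x y → y ∈ Γplus) ∧
    -- (3) the restriction of B to X \ Xplus perfectly matches X \ Xplus into
    -- a subset of Y \ Γ(Xplus)
    (∀ x : X, x ∉ Xplus → ∃ y : Y, (x, y) ∈ B ∧ y ∉ Γplus) := by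

  classical
  subst hXu hstep hXplus hΓ
  obtain ⟨hEB, hB1, hB2⟩ := id hB
  -- every neighbor of a reachable vertex is matched
  have key : ∀ u x : X, (∀ z : Y, (u, z) ∉ B) →
      Relation.ReflTransGen (fun a b => ∃ y : Y, E a y ∧ (a, y) ∉ B ∧ (b, y) ∈ B) u x →
      ∀ y : Y, E x y → ∃ x' : X, (x', y) ∈ B := by
    intro u x hu hpath y hxy
    by_contra hy
    push_neg at hy
    obtain ⟨l, hchain, hlast⟩ := List.exists_isChain_cons_of_relationReflTransGen hpath
    exact aug E B hmax l.length l le_rfl B hB rfl u x y hchain hlast hu hxy hy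
  have hmatch : ∀ y ∈ {y : Y | ∃ x ∈ {x : X | ∃ u ∈ {x : X | ∀ y : Y, (x, y) ∉ B},
      Relation.ReflTransGen (fun x x' => ∃ y : Y, E x y ∧ (x, y) ∉ B ∧ (x', y) ∈ B) u x}, E x y},
      ∃ x ∈ {x : X | ∃ u ∈ {x : X | ∀ y : Y, (x, y) ∉ B},
      Relation.ReflTransGen (fun x x' => ∃ y : Y, E x y ∧ (x, y) ∉ B ∧ (x', y) ∈ B) u x},
      (x, y) ∈ B := by
    rintro y ⟨x, hx, hxy⟩
    obtain ⟨u, hu, hpath⟩ := hx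
    obtain ⟨x', hx'⟩ := key u x hu hpath y hxy
    by_cases h : (x, y) ∈ B
    · exact ⟨x, ⟨u, hu, hpath⟩, h⟩
    · exact ⟨x', ⟨u, hu, hpath.tail ⟨y, hxy, h, hx'⟩⟩, hx'⟩
  set Xu : Set X := {x : X | ∀ y : Y, (x, y) ∉ B} with hXu
  set Xplus : Set X := {x : X | ∃ u ∈ Xu,
    Relation.ReflTransGen (fun x x' => ∃ y : Y, E x y ∧ (x, y) ∉ B ∧ (x', y) ∈ B) u x}
    with hXplus
  set Γplus : Set Y := {y : Y | ∃ x ∈ Xplus, E x y} with hΓ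
  -- the partner function
  set g : Y → X := fun y => if h : ∃ x, (x, y) ∈ B then h.choose else hunsat.choose with hgdef
  have hg : ∀ (y : Y) (x0 : X), (x0, y) ∈ B → (g y, y) ∈ B ∧ g y = x0 := by
    intro y x0 h0
    have hex : ∃ x, (x, y) ∈ B := ⟨x0, h0⟩
    have hmem : (g y, y) ∈ B := by
      rw [hgdef]; simp only [dif_pos hex]; exact hex.choose_spec
    exact ⟨hmem, congrArg Prod.fst (hB2 _ hmem _ h0 rfl)⟩
  have himg : g '' Γplus = Xplus ∩ {x : X | x ∉ Xu} := by
    ext x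
    constructor
    · rintro ⟨y, hyΓ, rfl⟩
      obtain ⟨x', hx', hx'B⟩ := hmatch y hyΓ
      obtain ⟨hmem, heq⟩ := hg y x' hx'B
      refine ⟨heq ▸ hx', fun hcon => hcon y hmem⟩
    · rintro ⟨hx1, hx2⟩
      simp only [Set.mem_setOf_eq, hXu] at hx2
      push_neg at hx2
      obtain ⟨y, hy⟩ := hx2
      exact ⟨y, ⟨x, hx1, hEB _ hy⟩, (hg y x hy).2⟩
  have hinj : Set.InjOn g Γplus := by
    intro y1 h1 y2 h2 heq
    obtain ⟨x1, _, hx1B⟩ := hmatch y1 h1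
    obtain ⟨x2, _, hx2B⟩ := hmatch y2 h2
    have m1 := (hg y1 x1 hx1B).1
    have m2 := (hg y2 x2 hx2B).1
    rw [← heq] at m2
    exact congrArg Prod.snd (hB1 _ m1 _ m2 rfl)
  have hcard1 : (Xplus ∩ {x : X | x ∉ Xu}).ncard = Γplus.ncard := by
    rw [← himg, Set.ncard_image_of_injOn hinj]
  have hXuXp : Xu ⊆ Xplus := fun x hx => ⟨x, hx, Relation.ReflTransGen.refl⟩
  have hsplit : Xplus = Xu ∪ (Xplus ∩ {x : X | x ∉ Xu}) := by
    ext x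
    constructor
    · intro hx
      by_cases h : x ∈ Xu
      · exact Or.inl h
      · exact Or.inr ⟨hx, h⟩
    · rintro (h | ⟨h, _⟩)
      · exact hXuXp h
      · exact h
  have hdisj : Disjoint Xu (Xplus ∩ {x : X | x ∉ Xu}) :=
    Set.disjoint_left.mpr fun x hx hx2 => hx2.2 hx
  have hcard2 : Xplus.ncard = Xu.ncard + Γplus.ncard := by
    rw [hsplit, Set.ncard_union_eq hdisj (Set.toFinite _) (Set.toFinite _), hcard1]
  have hXupos : 0 < Xu.ncard := by
    obtain ⟨u0, hu0⟩ := hunsat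
    exact (Set.ncard_pos (Set.toFinite _)).mpr ⟨u0, hu0⟩
  refine ⟨hmatch, hcard1, hcard2, by omega, ?_, ?_⟩
  · intro x hx y hxy
    exact ⟨x, hx, hxy⟩
  · intro x hx
    have hxu : x ∉ Xu := fun h => hx (hXuXp h)
    simp only [Set.mem_setOf_eq, hXu] at hxu
    push_neg at hxu
    obtain ⟨y, hy⟩ := hxu
    refine ⟨y, hy, fun hyΓ => ?_⟩
    obtain ⟨x', hx', hx'B⟩ := hmatch y hyΓ
    have : x' = x := congrArg Prod.fst (hB2 _ hx'B _ hy rfl)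
    exact hx (this ▸ hx')
end

section
/- Under the stated hypotheses on v_2, μ_2, (A_1, A_2, A_3), (A'_1, A'_2, A'_3), F_1, F_2, F_3, C_1, C_2, the following hold: (i) v_2(A_3) + v_2(C_2) ≥ (7/8)μ_2, and (ii) v_2(F_1) + v_2(F_2) + v_2(C_1) > (7/8)μ_2. -/
private lemma inf2_eq_min (f : Fin 2 → ℝ) : (⨅ j : Fin 2, f j) = min (f 0) (f 1) := by
  have hbdd : BddBelow (Set.range f) := (Set.finite_range f).bddBelow
  apply le_antisymm
  · exact le_min (ciInf_le hbdd 0) (ciInf_le hbdd 1)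
  · apply le_ciInf
    intro j
    fin_cases j
    · exact min_le_left _ _
    · exact min_le_right _ _

private lemma min_le_mms2 {ι : Type*} [DecidableEq ι] (S : Finset ι) (v : ι → ℝ)
    (hv : ∀ j ∈ S, 0 ≤ v j) (D₁ D₂ : Finset ι) (hd : Disjoint D₁ D₂)
    (hu : D₁ ∪ D₂ = S) : min (D₁.sum v) (D₂.sum v) ≤ mms 2 S v := by
  classical
  set P : Fin 2 → Finset ι := ![D₁, D₂] with hPdef
  have hpart : IsPartition 2 S P := by
    constructor
    · intro i j hij
      fin_cases i <;> fin_cases j <;> simp_all [P] <;>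
        first | exact hd | exact hd.symm
    · rw [show (Finset.univ : Finset (Fin 2)) = {0, 1} by decide]
      simp [P, hu]
  have hmem : min (D₁.sum v) (D₂.sum v) ∈ {x : ℝ | ∃ Q : Fin 2 → Finset ι,
      IsPartition 2 S Q ∧ x = ⨅ j : Fin 2, (Q j).sum v} := by
    refine ⟨P, hpart, ?_⟩
    rw [inf2_eq_min]
    simp [P]
  have hbdd : BddAbove {x : ℝ | ∃ Q : Fin 2 → Finset ι,
      IsPartition 2 S Q ∧ x = ⨅ j : Fin 2, (Q j).sum v} := by
    refine ⟨S.sum v, ?_⟩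
    rintro x ⟨Q, hQ, rfl⟩
    have h0 : (⨅ j : Fin 2, (Q j).sum v) ≤ (Q 0).sum v :=
      ciInf_le (Set.finite_range _).bddBelow 0
    refine h0.trans (Finset.sum_le_sum_of_subset_of_nonneg ?_ ?_)
    · rw [← hQ.2]; exact Finset.subset_biUnion_of_mem Q (Finset.mem_univ 0)
    · intro i hi _; exact hv i hi
  have := le_csSup hbdd hmem
  unfold mms
  exact this

private lemma sum_split3 {ι : Type*} [DecidableEq ι] {M : Finset ι} (v : ι → ℝ)
    (B : Fin 3 → Finset ι) (hdisj : ∀ i j : Fin 3, i ≠ j → Disjoint (B i) (B j))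
    (hcov : Finset.univ.biUnion B = M) (T : Finset ι) (hT : T ⊆ M) :
    T.sum v = (B 0 ∩ T).sum v + (B 1 ∩ T).sum v + (B 2 ∩ T).sum v := by
  have hM : B 0 ∪ B 1 ∪ B 2 = M := by
    rw [← hcov, show (Finset.univ : Finset (Fin 3)) = {0, 1, 2} by decide]
    simp [Finset.biUnion_insert, Finset.union_assoc]
  have hT2 : T = (B 0 ∩ T) ∪ (B 1 ∩ T) ∪ (B 2 ∩ T) := by
    rw [← Finset.union_inter_distrib_right, ← Finset.union_inter_distrib_right, hM,
      Finset.inter_eq_right.mpr hT]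
  have d01 : Disjoint (B 0 ∩ T) (B 1 ∩ T) :=
    (hdisj 0 1 (by decide)).mono Finset.inter_subset_left Finset.inter_subset_left
  have d02 : Disjoint (B 0 ∩ T) (B 2 ∩ T) :=
    (hdisj 0 2 (by decide)).mono Finset.inter_subset_left Finset.inter_subset_left
  have d12 : Disjoint (B 1 ∩ T) (B 2 ∩ T) :=
    (hdisj 1 2 (by decide)).mono Finset.inter_subset_left Finset.inter_subset_left
  conv_lhs => rw [hT2]
  rw [Finset.sum_union (Finset.disjoint_union_left.mpr ⟨d02, d12⟩), Finset.sum_union d01]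

/-- under the stated hypotheses,
(i) `v₂(A₃) + v₂(C₂) ≥ (7/8)μ₂` and (ii) `v₂(F₁) + v₂(F₂) + v₂(C₁) > (7/8)μ₂`. -/
theorem claim_sums_seven_eighths {ι : Type*} [DecidableEq ι]
    (M : Finset ι) (v : ι → ℝ) (hv : ∀ j ∈ M, 0 ≤ v j)
    (μ : ℝ) (hμ : μ = mms 3 M v)
    -- every single good has value less than (7/8)μ₂
    (hitems : ∀ j ∈ M, v j < 7 / 8 * μ)
    -- (A 0, A 1, A 2) is a partition of M whose last two bundles are small
    (A : Fin 3 → Finset ι) (hA : IsPartition 3 M A)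
    (hA2 : (A 1).sum v < 7 / 8 * μ) (hA3 : (A 2).sum v < 7 / 8 * μ)
    -- (A' 0, A' 1, A' 2) is a 3-maximin partition of M w.r.t. v
    (A' : Fin 3 → Finset ι) (hA' : IsPartition 3 M A')
    (hA'opt : min ((A' 0).sum v) (min ((A' 1).sum v) ((A' 2).sum v)) = μ)
    -- F i = A' i ∩ A 2, indexed so that v(F 0) ≤ v(F 1) ≤ v(F 2), and v(F 0) > μ/8
    (F : Fin 3 → Finset ι) (hF : ∀ i : Fin 3, F i = A' i ∩ A 2)
    (hF01 : (F 0).sum v ≤ (F 1).sum v) (hF12 : (F 1).sum v ≤ (F 2).sum v)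
    (hF0 : μ / 8 < (F 0).sum v)
    -- (C₁, C₂) is a 2-maximin partition of A 0 w.r.t. v, with v(C₁) ≥ v(C₂)
    (C₁ C₂ : Finset ι) (hC : Disjoint C₁ C₂) (hCu : C₁ ∪ C₂ = A 0)
    (hCopt : min (C₁.sum v) (C₂.sum v) = mms 2 (A 0) v)
    (hC12 : C₂.sum v ≤ C₁.sum v) :
    7 / 8 * μ ≤ (A 2).sum v + C₂.sum v ∧
      7 / 8 * μ < (F 0).sum v + (F 1).sum v + C₁.sum v := by
  classical
  obtain ⟨hAdisj, hAcov⟩ := hA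
  obtain ⟨hA'disj, hA'cov⟩ := hA'
  have hAsub : ∀ i : Fin 3, A i ⊆ M := fun i => by
    rw [← hAcov]; exact Finset.subset_biUnion_of_mem A (Finset.mem_univ i)
  have hA'sub : ∀ i : Fin 3, A' i ⊆ M := fun i => by
    rw [← hA'cov]; exact Finset.subset_biUnion_of_mem A' (Finset.mem_univ i)
  have hvsub : ∀ T : Finset ι, T ⊆ M → 0 ≤ T.sum v := fun T hT =>
    Finset.sum_nonneg fun i hi => hv i (hT hi)
  have hMsum : M.sum v = (A 0).sum v + (A 1).sum v + (A 2).sum v := by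
    have := sum_split3 v A hAdisj hAcov M (le_refl M)
    rwa [Finset.inter_eq_left.mpr (hAsub 0), Finset.inter_eq_left.mpr (hAsub 1),
      Finset.inter_eq_left.mpr (hAsub 2)] at this
  have hM'sum : M.sum v = (A' 0).sum v + (A' 1).sum v + (A' 2).sum v := by
    have := sum_split3 v A' hA'disj hA'cov M (le_refl M)
    rwa [Finset.inter_eq_left.mpr (hA'sub 0), Finset.inter_eq_left.mpr (hA'sub 1),
      Finset.inter_eq_left.mpr (hA'sub 2)] at this
  have hA'ge : ∀ i : Fin 3, μ ≤ (A' i).sum v := by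
    intro i
    rw [← hA'opt]
    fin_cases i
    · exact min_le_left _ _
    · exact (min_le_right _ _).trans (min_le_left _ _)
    · exact (min_le_right _ _).trans (min_le_right _ _)
  have hA2F : (A 2).sum v = (F 0).sum v + (F 1).sum v + (F 2).sum v := by
    have := sum_split3 v A' hA'disj hA'cov (A 2) (hAsub 2)
    rwa [← hF 0, ← hF 1, ← hF 2] at this
  have hC1C2 : C₁.sum v + C₂.sum v = (A 0).sum v := by
    rw [← hCu, Finset.sum_union hC]
  have hFsub : ∀ i : Fin 3, F i ⊆ M := fun i => by
    rw [hF i]; exact Finset.inter_subset_right.trans (hAsub 2)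
  have hF1' : μ / 8 < (F 1).sum v := lt_of_lt_of_le hF0 hF01
  have hF2' : μ / 8 < (F 2).sum v := lt_of_lt_of_le hF1' hF12
  -- claim (ii)
  have claim2 : 7 / 8 * μ < (F 0).sum v + (F 1).sum v + C₁.sum v := by
    linarith [hA'ge 0, hA'ge 1, hA'ge 2]
  refine ⟨?_, claim2⟩
  -- claim (i)
  rcases le_or_gt μ 0 with hμ0 | hμ0
  · have h1 := hvsub (A 2) (hAsub 2)
    have hC2M : C₂ ⊆ M := fun x hx => hAsub 0 (hCu ▸ Finset.mem_union_right C₁ hx)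
    have h2 := hvsub C₂ hC2M
    linarith
  have hA1split : (A 1).sum v
      = (A' 0 ∩ A 1).sum v + (A' 1 ∩ A 1).sum v + (A' 2 ∩ A 1).sum v :=
    sum_split3 v A' hA'disj hA'cov (A 1) (hAsub 1)
  have hex : ∃ a : Fin 3, (A' a ∩ A 1).sum v ≤ (A 1).sum v / 3 := by
    by_contra h
    push_neg at h
    linarith [h 0, h 1, h 2]
  obtain ⟨a, ha⟩ := hex
  have e1 : (A' a).sum v
      = (A 0 ∩ A' a).sum v + (A 1 ∩ A' a).sum v + (A 2 ∩ A' a).sum v :=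
    sum_split3 v A hAdisj hAcov (A' a) (hA'sub a)
  have eFa : (A 2 ∩ A' a).sum v = (F a).sum v := by rw [hF a, Finset.inter_comm]
  have eA1a : (A 1 ∩ A' a).sum v = (A' a ∩ A 1).sum v := by rw [Finset.inter_comm]
  set D₁ : Finset ι := A 0 ∩ A' a with hD₁
  set D₂ : Finset ι := A 0 \ D₁ with hD₂
  have hDd : Disjoint D₁ D₂ := Finset.disjoint_sdiff
  have hDu : D₁ ∪ D₂ = A 0 := Finset.union_sdiff_of_subset Finset.inter_subset_left
  have hDsum : D₁.sum v + D₂.sum v = (A 0).sum v := by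
    rw [← hDu, Finset.sum_union hDd]
  have hkey : min (D₁.sum v) (D₂.sum v) ≤ C₂.sum v := by
    rw [show C₂.sum v = mms 2 (A 0) v from by rw [← hCopt, min_eq_right hC12]]
    exact min_le_mms2 (A 0) v (fun j hj => hv j (hAsub 0 hj)) D₁ D₂ hDd hDu
  have hother : ∀ b : Fin 3, μ / 4 < (A 2).sum v - (F b).sum v := by
    intro b
    fin_cases b
    · show μ / 4 < (A 2).sum v - (F 0).sum v; linarith
    · show μ / 4 < (A 2).sum v - (F 1).sum v; linarith
    · show μ / 4 < (A 2).sum v - (F 2).sum v; linarith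
  have htwo : ∀ b : Fin 3, 2 * μ ≤ M.sum v - (A' b).sum v := by
    intro b
    fin_cases b
    · show 2 * μ ≤ M.sum v - (A' 0).sum v; linarith [hA'ge 1, hA'ge 2]
    · show 2 * μ ≤ M.sum v - (A' 1).sum v; linarith [hA'ge 0, hA'ge 2]
    · show 2 * μ ≤ M.sum v - (A' 2).sum v; linarith [hA'ge 0, hA'ge 1]
  have nn1 : 0 ≤ (A' a ∩ A 1).sum v :=
    hvsub _ (Finset.inter_subset_right.trans (hAsub 1))
  have nnFa : 0 ≤ (F a).sum v := hvsub _ (hFsub a)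
  have hD1ge : 7 / 8 * μ - (A 2).sum v ≤ D₁.sum v := by
    have h1 := hA'ge a
    have h2 := hother a
    linarith
  have hD2ge : 7 / 8 * μ - (A 2).sum v ≤ D₂.sum v := by
    have h1 := htwo a
    linarith
  have hmin : 7 / 8 * μ - (A 2).sum v ≤ min (D₁.sum v) (D₂.sum v) := le_min hD1ge hD2ge
  linarith
end

section
/- Under the stated hypotheses on v_2, μ_2, (A_1, A_2, A_3), (A'_1, A'_2, A'_3), F_1, F_2, F_3, C_1, C_2, if additionally max{ v_2(C_1), v_2(F_3) + v_2(C_2) } < (7/8)μ_2, then min{ v_2(F_1) + v_2(C_1), v_2(F_2) + v_2(F_3) + v_2(C_2) } ≥ (7/8)μ_2. -/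
/-- under the stated hypotheses, if moreover
`max{v₂(C₁), v₂(F₃) + v₂(C₂)} < (7/8)μ₂`, then
`min{v₂(F₁) + v₂(C₁), v₂(F₂) + v₂(F₃) + v₂(C₂)} ≥ (7/8)μ₂`. -/
theorem claim_sums_seven_eighths_second {ι : Type*} [DecidableEq ι]
    (M : Finset ι) (v : ι → ℝ) (hv : ∀ j ∈ M, 0 ≤ v j)
    (μ : ℝ) (hμ : μ = mms 3 M v)
    -- every single good has value less than (7/8)μ₂
    (hitems : ∀ j ∈ M, v j < 7 / 8 * μ)
    -- (A 0, A 1, A 2) is a partition of M whose last two bundles are small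
    (A : Fin 3 → Finset ι) (hA : IsPartition 3 M A)
    (hA2 : (A 1).sum v < 7 / 8 * μ) (hA3 : (A 2).sum v < 7 / 8 * μ)
    -- (A' 0, A' 1, A' 2) is a 3-maximin partition of M w.r.t. v
    (A' : Fin 3 → Finset ι) (hA' : IsPartition 3 M A')
    (hA'opt : min ((A' 0).sum v) (min ((A' 1).sum v) ((A' 2).sum v)) = μ)
    -- F i = A' i ∩ A 2, indexed so that v(F 0) ≤ v(F 1) ≤ v(F 2), and v(F 0) > μ/8
    (F : Fin 3 → Finset ι) (hF : ∀ i : Fin 3, F i = A' i ∩ A 2)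
    (hF01 : (F 0).sum v ≤ (F 1).sum v) (hF12 : (F 1).sum v ≤ (F 2).sum v)
    (hF0 : μ / 8 < (F 0).sum v)
    -- (C₁, C₂) is a 2-maximin partition of A 0 w.r.t. v, with v(C₁) ≥ v(C₂)
    (C₁ C₂ : Finset ι) (hC : Disjoint C₁ C₂) (hCu : C₁ ∪ C₂ = A 0)
    (hCopt : min (C₁.sum v) (C₂.sum v) = mms 2 (A 0) v)
    (hC12 : C₂.sum v ≤ C₁.sum v)
    (hmax : max (C₁.sum v) ((F 2).sum v + C₂.sum v) < 7 / 8 * μ) :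
    7 / 8 * μ ≤ min ((F 0).sum v + C₁.sum v) ((F 1).sum v + (F 2).sum v + C₂.sum v) := by
  obtain ⟨hAdisj, hAcov⟩ := hA
  obtain ⟨hA'disj, hA'cov⟩ := hA'
  have hMA : M.sum v = (A 0).sum v + (A 1).sum v + (A 2).sum v := by
    rw [← hAcov, Finset.sum_biUnion (fun i _ j _ hij => hAdisj i j hij)]
    rw [Fin.sum_univ_three]
  have hMA' : M.sum v = (A' 0).sum v + (A' 1).sum v + (A' 2).sum v := by
    rw [← hA'cov, Finset.sum_biUnion (fun i _ j _ hij => hA'disj i j hij)]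
    rw [Fin.sum_univ_three]
  have hμ0 : μ ≤ (A' 0).sum v := hA'opt ▸ min_le_left _ _
  have hμ1 : μ ≤ (A' 1).sum v := hA'opt ▸ le_trans (min_le_right _ _) (min_le_left _ _)
  have hμ2 : μ ≤ (A' 2).sum v := hA'opt ▸ le_trans (min_le_right _ _) (min_le_right _ _)
  have hA2F : (A 2).sum v = (F 0).sum v + (F 1).sum v + (F 2).sum v := by
    have hcov : A 2 = Finset.univ.biUnion F := by
      ext x
      simp only [Finset.mem_biUnion, Finset.mem_univ, true_and]
      constructor
      · intro hx
        have hxM : x ∈ M := by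
          rw [← hAcov]
          exact Finset.mem_biUnion.mpr ⟨2, Finset.mem_univ _, hx⟩
        rw [← hA'cov] at hxM
        obtain ⟨i, _, hi⟩ := Finset.mem_biUnion.mp hxM
        exact ⟨i, by rw [hF i]; exact Finset.mem_inter.mpr ⟨hi, hx⟩⟩
      · rintro ⟨i, hx⟩
        rw [hF i] at hx
        exact (Finset.mem_inter.mp hx).2
    have hFdisj : ∀ i ∈ (Finset.univ : Finset (Fin 3)), ∀ j ∈ Finset.univ,
        i ≠ j → Disjoint (F i) (F j) := by
      intro i _ j _ hij
      rw [hF i, hF j]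
      exact Finset.disjoint_of_subset_left Finset.inter_subset_left
        (Finset.disjoint_of_subset_right Finset.inter_subset_left (hA'disj i j hij))
    rw [hcov, Finset.sum_biUnion hFdisj, Fin.sum_univ_three]
  have hA0C : (A 0).sum v = C₁.sum v + C₂.sum v := by
    rw [← hCu, Finset.sum_union hC]
  have h1 : C₁.sum v < 7 / 8 * μ := lt_of_le_of_lt (le_max_left _ _) hmax
  have h2 : (F 2).sum v + C₂.sum v < 7 / 8 * μ := lt_of_le_of_lt (le_max_right _ _) hmax
  refine le_min ?_ ?_ <;> linarith
end

section
/- Let N be a set of n agents with additive valuations v_1, …, v_n over a finite set M = {1, …, m} of goods, and let ρ ∈ (0, 1]. For each agent i, let σ_i be a permutation of M sorting her values in decreasing order (v_i(σ_i(j)) ≥ v_i(σ_i(j+1)) for all j), and let v_i^↑ be the additive valuation defined by v_i^↑({j}) = v_i({σ_i(j)}). If there exists a partition (T_1, …, T_n) of M with v_i^↑(T_i) ≥ ρ · μ_i(n, M) for every agent i, then there exists a partition (T'_1, …, T'_n) of M with v_i(T'_i) ≥ ρ · μ_i(n, M) for every agent i. -/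
noncomputable def pickList (m : ℕ) (w : ℕ → Fin m → ℝ) : ℕ → List (Fin m)
  | 0 => []
  | k + 1 =>
      let L := pickList m w k
      if h : (Finset.univ \ L.toFinset).Nonempty then
        ((Finset.univ \ L.toFinset).exists_max_image (w k) h).choose :: L
      else L

theorem pickList_basic (m : ℕ) (w : ℕ → Fin m → ℝ) :
    ∀ k, k ≤ m → (pickList m w k).Nodup ∧ (pickList m w k).length = k := by
  intro k
  induction k with
  | zero => intro _; simp [pickList]
  | succ k ih =>
      intro hk
      obtain ⟨hnd, hlen⟩ := ih (Nat.le_of_succ_le hk)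
      have hcard : (pickList m w k).toFinset.card = k := by
        rw [List.toFinset_card_of_nodup hnd, hlen]
      have hne : (Finset.univ \ (pickList m w k).toFinset).Nonempty := by
        rw [← Finset.card_pos, Finset.card_sdiff_of_subset (Finset.subset_univ _), hcard,
          Finset.card_univ, Fintype.card_fin]
        omega
      have hc := ((Finset.univ \ (pickList m w k).toFinset).exists_max_image
        (w k) hne).choose_spec
      rw [pickList]
      simp only [dif_pos hne]
      refine ⟨List.nodup_cons.mpr ⟨?_, hnd⟩, by simp [hlen]⟩
      have := hc.1
      rw [Finset.mem_sdiff] at this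
      simpa using this.2

theorem pickList_succ (m : ℕ) (w : ℕ → Fin m → ℝ) (k : ℕ) (hk : k < m) :
    ∃ c, pickList m w (k + 1) = c :: pickList m w k ∧ c ∉ pickList m w k ∧
      ∀ b : Fin m, b ∉ pickList m w k → w k b ≤ w k c := by
  obtain ⟨hnd, hlen⟩ := pickList_basic m w k (le_of_lt hk)
  have hcard : (pickList m w k).toFinset.card = k := by
    rw [List.toFinset_card_of_nodup hnd, hlen]
  have hne : (Finset.univ \ (pickList m w k).toFinset).Nonempty := by
    rw [← Finset.card_pos, Finset.card_sdiff_of_subset (Finset.subset_univ _), hcard,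
      Finset.card_univ, Fintype.card_fin]
    omega
  have hc := ((Finset.univ \ (pickList m w k).toFinset).exists_max_image
    (w k) hne).choose_spec
  refine ⟨((Finset.univ \ (pickList m w k).toFinset).exists_max_image
      (w k) hne).choose, ?_, ?_, ?_⟩
  · rw [pickList]; simp only [dif_pos hne]
  · have := hc.1; rw [Finset.mem_sdiff] at this; simpa using this.2
  · intro b hb
    exact hc.2 b (by simp [Finset.mem_sdiff, hb])

noncomputable def pickF (m : ℕ) (w : ℕ → Fin m → ℝ) (hm : 0 < m) (j : ℕ) : Fin m :=
  ((pickList m w (j + 1)).head?).getD ⟨0, hm⟩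

theorem pickF_spec (m : ℕ) (w : ℕ → Fin m → ℝ) (hm : 0 < m) (j : ℕ) (hj : j < m) :
    pickF m w hm j ∉ pickList m w j ∧
      ∀ b : Fin m, b ∉ pickList m w j → w j b ≤ w j (pickF m w hm j) := by
  obtain ⟨c, hcons, hnm, hmax⟩ := pickList_succ m w j hj
  have : pickF m w hm j = c := by rw [pickF, hcons]; rfl
  rw [this]; exact ⟨hnm, hmax⟩

theorem pickF_mem (m : ℕ) (w : ℕ → Fin m → ℝ) (hm : 0 < m) (j k : ℕ)
    (hj : j < m) (hk : j < k) : pickF m w hm j ∈ pickList m w k := by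
  induction k with
  | zero => omega
  | succ k ih =>
      rcases Nat.lt_or_ge j k with h | h
      · have hmem := ih h
        rw [pickList]
        split
        · exact List.mem_cons_of_mem _ hmem
        · exact hmem
      · have : j = k := by omega
        subst this
        obtain ⟨c, hcons, -, -⟩ := pickList_succ m w j hj
        have : pickF m w hm j = c := by rw [pickF, hcons]; rfl
        rw [hcons, this]; exact List.mem_cons_self

theorem pickF_inj (m : ℕ) (w : ℕ → Fin m → ℝ) (hm : 0 < m) (j j' : ℕ)
    (hj : j < m) (hj' : j' < m) (hne : j ≠ j') :
    pickF m w hm j ≠ pickF m w hm j' := by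
  wlog h : j < j' generalizing j j'
  · exact (this j' j hj' hj (Ne.symm hne) (by omega)).symm
  intro heq
  have h1 := pickF_mem m w hm j j' hj h
  have h2 := (pickF_spec m w hm j' hj').1
  rw [← heq] at h2
  exact h2 h1

/-- if `σ i` sorts the values of agent `i` in decreasing order and the
sorted valuations `v_i^↑ = v_i ∘ σ_i` admit a `ρ`-approximate maximin share
allocation, then so do the original valuations. -/
theorem mms_fully_correlated_reduction
    (n m : ℕ) (hn : 1 ≤ n)
    (v : Fin n → Fin m → ℝ) (hv : ∀ i j, 0 ≤ v i j)
    (ρ : ℝ) (hρ0 : 0 < ρ) (hρ1 : ρ ≤ 1)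
    (σ : Fin n → Equiv.Perm (Fin m))
    (hσ : ∀ i : Fin n, Antitone fun j => v i (σ i j))
    (T : Fin n → Finset (Fin m)) (hT : IsPartition n Finset.univ T)
    (hTval : ∀ i : Fin n, ρ * mms n Finset.univ (v i) ≤ (T i).sum fun j => v i (σ i j)) :
    ∃ T' : Fin n → Finset (Fin m), IsPartition n Finset.univ T' ∧
      ∀ i : Fin n, ρ * mms n Finset.univ (v i) ≤ (T' i).sum (v i) := by
  rcases Nat.eq_zero_or_pos m with hm0 | hm
  · subst hm0
    refine ⟨T, hT, fun i => ?_⟩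
    have h1 := hTval i
    have hTe : T i = ∅ := Finset.eq_empty_of_isEmpty _
    rw [hTe] at h1 ⊢
    simpa using h1
  · classical
    have howner : ∀ j : Fin m, ∃ i : Fin n, j ∈ T i := by
      intro j
      have hj : j ∈ Finset.univ.biUnion T := by rw [hT.2]; exact Finset.mem_univ j
      obtain ⟨i, -, hi⟩ := Finset.mem_biUnion.mp hj
      exact ⟨i, hi⟩
    choose a ha using howner
    have ha_eq : ∀ (i : Fin n) (j : Fin m), j ∈ T i → a j = i := by
      intro i j hj
      by_contra hne
      exact (Finset.disjoint_left.mp (hT.1 _ _ hne) (ha j)) hj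
    set w : ℕ → Fin m → ℝ := fun k g => if h : k < m then v (a ⟨k, h⟩) g else 0 with hw
    set p : Fin m → Fin m := fun j => pickF m w hm j.val with hp
    have hpinj : Function.Injective p := by
      intro j j' h
      by_contra hne
      exact pickF_inj m w hm j.val j'.val j.isLt j'.isLt
        (fun he => hne (Fin.ext he)) h
    have hpsurj : Function.Surjective p := Finite.surjective_of_injective hpinj
    have hkey : ∀ (i : Fin n) (j : Fin m), j ∈ T i → v i (σ i j) ≤ v i (p j) := by
      intro i j hj
      have hai : a j = i := ha_eq i j hj
      have hwj : w j.val = v i := by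
        funext g
        rw [hw]
        simp only [dif_pos j.isLt, Fin.eta, hai]
      obtain ⟨hnd, hlen⟩ := pickList_basic m w j.val (le_of_lt j.isLt)
      have hcard : (pickList m w j.val).toFinset.card = j.val := by
        rw [List.toFinset_card_of_nodup hnd, hlen]
      have hne2 : ((Finset.Iic j).image (σ i) \ (pickList m w j.val).toFinset).Nonempty := by
        rw [← Finset.card_pos]
        have h1 : ((Finset.Iic j).image (σ i)).card = j.val + 1 := by
          rw [Finset.card_image_of_injective _ (σ i).injective, Fin.card_Iic]
        have h2 := Finset.card_le_card_sdiff_add_card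
          (s := (Finset.Iic j).image (σ i)) (t := (pickList m w j.val).toFinset)
        omega
      obtain ⟨g, hg⟩ := hne2
      rw [Finset.mem_sdiff] at hg
      obtain ⟨l, hl, hlg⟩ := Finset.mem_image.mp hg.1
      have hgnot : g ∉ pickList m w j.val := by simpa using hg.2
      have hmax := (pickF_spec m w hm j.val j.isLt).2 g hgnot
      rw [hwj] at hmax
      calc v i (σ i j) ≤ v i (σ i l) := hσ i (Finset.mem_Iic.mp hl)
        _ = v i g := by rw [hlg]
        _ ≤ v i (p j) := hmax
    refine ⟨fun i => (T i).image p, ⟨?_, ?_⟩, ?_⟩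
    · intro i i' hne
      have hd := hT.1 i i' hne
      rw [Finset.disjoint_left] at hd ⊢
      intro x hx hx'
      obtain ⟨j, hj, rfl⟩ := Finset.mem_image.mp hx
      obtain ⟨j', hj', he⟩ := Finset.mem_image.mp hx'
      rw [hpinj he] at hj'
      exact hd hj hj'
    · apply Finset.eq_univ_iff_forall.mpr
      intro g
      obtain ⟨j, rfl⟩ := hpsurj g
      exact Finset.mem_biUnion.mpr ⟨a j, Finset.mem_univ _, Finset.mem_image_of_mem p (ha j)⟩
    · intro i
      calc ρ * mms n Finset.univ (v i)
          ≤ (T i).sum (fun j => v i (σ i j)) := hTval i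
        _ ≤ (T i).sum (fun j => v i (p j)) := Finset.sum_le_sum (fun j hj => hkey i j hj)
        _ = ((T i).image p).sum (v i) :=
            (Finset.sum_image (fun x _ y _ h => hpinj h)).symm
end

section
/- Let n ≥ 1 and m = kn for some integer k ≥ 1, and let N = {1, …, n} be agents with additive valuations over M = {1, …, m} such that v_{ij} ∈ {0, 1, 2} for all i, j and the valuations are fully correlated and sorted: v_{i1} ≥ v_{i2} ≥ … ≥ v_{im} for every agent i. Define buckets B_j = { j, n + j, 2n + j, …, (k−1)n + j } for j = 1, …, n. Then for every agent i and every j with 1 ≤ j ≤ ⌈n/2⌉, it holds that v_i(B_j) ≥ μ_i(n, M); that is, every agent is either satisfied (all n buckets have value at least her maximin share) or left-satisfied (at least the ⌈n/2⌉ leftmost buckets do). -/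
private lemma block_bound (w : ℕ → ℕ) (n j a c : ℕ) (hjn : j ≤ n)
    (hc : ∀ m ∈ Finset.Ioc a (a + (j - 1)), w m ≤ c)
    (hlow : ∀ m ∈ Finset.Ioc (a + (j - 1)) (a + n), w m ≤ w (a + j)) :
    (Finset.Ioc a (a + n)).sum w ≤ (j - 1) * c + (n - (j - 1)) * w (a + j) := by
  have h1 : a ≤ a + (j - 1) := Nat.le_add_right _ _
  have h2 : a + (j - 1) ≤ a + n := by omega
  rw [← Finset.sum_Ioc_consecutive w h1 h2]
  have b1 : (Finset.Ioc a (a + (j - 1))).sum w ≤ (j - 1) * c := by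
    calc (Finset.Ioc a (a + (j - 1))).sum w ≤ (Finset.Ioc a (a + (j - 1))).card • c :=
          Finset.sum_le_card_nsmul _ _ _ hc
      _ = (j - 1) * c := by rw [Nat.card_Ioc, smul_eq_mul]; congr 1; omega
  have b2 : (Finset.Ioc (a + (j - 1)) (a + n)).sum w ≤ (n - (j - 1)) * w (a + j) := by
    calc (Finset.Ioc (a + (j - 1)) (a + n)).sum w
        ≤ (Finset.Ioc (a + (j - 1)) (a + n)).card • w (a + j) :=
          Finset.sum_le_card_nsmul _ _ _ hlow
      _ = (n - (j - 1)) * w (a + j) := by rw [Nat.card_Ioc, smul_eq_mul]; congr 1; omega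
  exact add_le_add b1 b2

/-- Key counting bound: the total value of the first `(K+1)n` goods, plus
`(j-1)` extra copies of the last anchor, is at most `2(j-1)` plus `n` times
the bucket value. -/
private lemma main_bound (w : ℕ → ℕ) (n j k : ℕ) (hj1 : 1 ≤ j) (hjn : j ≤ n)
    (hw2 : ∀ m, w m ≤ 2)
    (hmono : ∀ m₁ m₂, 1 ≤ m₁ → m₂ ≤ k * n → m₁ ≤ m₂ → w m₂ ≤ w m₁) :
    ∀ K, K + 1 ≤ k →
      (Finset.Ioc 0 ((K + 1) * n)).sum w + (j - 1) * w (K * n + j)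
        ≤ 2 * (j - 1) + n * (Finset.range (K + 1)).sum (fun t => w (t * n + j)) := by
  intro K
  induction K with
  | zero =>
    intro hk1
    have hb := block_bound w n j 0 2 hjn (fun m _ => hw2 m)
      (by
        intro m hm
        rw [Finset.mem_Ioc] at hm
        have hne : n ≤ k * n := by nlinarith
        exact hmono (0 + j) m (by omega) (by omega) (by omega))
    simp only [zero_add, one_mul, zero_mul, Finset.sum_range_one] at *
    have key : (n - (j - 1)) * w j + (j - 1) * w j = n * w j := by
      rw [← Nat.add_mul]; congr 1; omega
    linarith
  | succ K ih =>
    intro hk2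
    have IH := ih (by omega)
    have hj4 : (j - 1) + 1 ≤ n := by omega
    have hj5 : j ≤ (j - 1) + 1 := by omega
    have e1 : (K + 1) * n = K * n + n := by ring
    have e2 : (K + 1 + 1) * n = K * n + n + n := by ring
    have e3 : (K + 1 + 1) * n ≤ k * n := Nat.mul_le_mul_right n hk2
    have hb := block_bound w n j ((K + 1) * n) (w (K * n + j)) hjn
      (by
        intro m hm
        rw [Finset.mem_Ioc] at hm
        refine hmono (K * n + j) m (by omega) (by linarith [hm.2]) (by linarith [hm.1]))
      (by
        intro m hm
        rw [Finset.mem_Ioc] at hm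
        refine hmono ((K + 1) * n + j) m (by omega) (by linarith [hm.2])
          (by linarith [hm.1]))
    have hsplit : (Finset.Ioc 0 ((K + 1) * n)).sum w
        + (Finset.Ioc ((K + 1) * n) ((K + 1) * n + n)).sum w
        = (Finset.Ioc 0 ((K + 1 + 1) * n)).sum w := by
      rw [Finset.sum_Ioc_consecutive w (Nat.zero_le _) (Nat.le_add_right _ _)]
      congr 1
      ring
    have hB : (Finset.range (K + 1 + 1)).sum (fun t => w (t * n + j))
        = (Finset.range (K + 1)).sum (fun t => w (t * n + j)) + w ((K + 1) * n + j) :=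
      Finset.sum_range_succ _ _
    have key : (n - (j - 1)) * w ((K + 1) * n + j) + (j - 1) * w ((K + 1) * n + j)
        = n * w ((K + 1) * n + j) := by
      rw [← Nat.add_mul]; congr 1; omega
    rw [hB, ← hsplit, Nat.mul_add]
    linarith

/-- with fully correlated sorted valuations taking values in {0,1,2}
over the goods `M = {1, …, kn}`, every one of the `⌈n/2⌉` leftmost buckets
`B j = {j, n+j, …, (k−1)n+j}` has value at least the maximin share of every agent. -/
theorem left_buckets_ge_mms
    (n k : ℕ) (hn : 1 ≤ n) (hk : 1 ≤ k)
    (v : Fin n → ℕ → ℝ)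
    (hval : ∀ i : Fin n, ∀ j ∈ Finset.Icc 1 (k * n), v i j = 0 ∨ v i j = 1 ∨ v i j = 2)
    (hsorted : ∀ i : Fin n, ∀ j₁ ∈ Finset.Icc 1 (k * n), ∀ j₂ ∈ Finset.Icc 1 (k * n),
      j₁ ≤ j₂ → v i j₂ ≤ v i j₁) :
    ∀ i : Fin n, ∀ j : ℕ, 1 ≤ j → j ≤ (n + 1) / 2 →
      mms n (Finset.Icc 1 (k * n)) (v i) ≤
        (((Finset.range k).image fun t => t * n + j).sum (v i)) := by
  classical
  intro i j hj1 hj2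
  have hjn : j ≤ n := by omega
  -- integer-valued version of the valuation
  set w : ℕ → ℕ := fun m => if v i m = 2 then 2 else if v i m = 1 then 1 else 0 with hw_def
  have hw2 : ∀ m, w m ≤ 2 := by
    intro m; simp only [hw_def]
    split <;> [skip; split] <;> omega
  have hw : ∀ m ∈ Finset.Icc 1 (k * n), v i m = (w m : ℝ) := by
    intro m hm
    rcases hval i m hm with h | h | h <;> simp [hw_def, h]
  have hmem : ∀ m, 1 ≤ m → m ≤ k * n → m ∈ Finset.Icc 1 (k * n) := by
    intro m h1 h2; rw [Finset.mem_Icc]; exact ⟨h1, h2⟩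
  have hmono : ∀ m₁ m₂, 1 ≤ m₁ → m₂ ≤ k * n → m₁ ≤ m₂ → w m₂ ≤ w m₁ := by
    intro m₁ m₂ h1 h2 hle
    have hm₁ : m₁ ∈ Finset.Icc 1 (k * n) := hmem m₁ h1 (le_trans hle h2)
    have hm₂ : m₂ ∈ Finset.Icc 1 (k * n) := hmem m₂ (le_trans h1 hle) h2
    have hv := hsorted i m₁ hm₁ m₂ hm₂ hle
    rw [hw m₁ hm₁, hw m₂ hm₂] at hv
    exact_mod_cast hv
  -- the bucket value as a natural number
  set B : ℕ := (Finset.range k).sum (fun t => w (t * n + j)) with hB_def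
  have hbucket_mem : ∀ t ∈ Finset.range k, t * n + j ∈ Finset.Icc 1 (k * n) := by
    intro t ht
    rw [Finset.mem_range] at ht
    refine hmem _ (by omega) ?_
    have : (t + 1) * n ≤ k * n := Nat.mul_le_mul_right n ht
    nlinarith
  have hbucket : (((Finset.range k).image fun t => t * n + j).sum (v i)) = (B : ℝ) := by
    rw [Finset.sum_image (by
      intro x _ y _ hxy
      have : x * n = y * n := by simp only at hxy; omega
      exact Nat.eq_of_mul_eq_mul_right (by omega) this)]
    rw [hB_def, Nat.cast_sum]
    exact Finset.sum_congr rfl (fun t ht => hw _ (hbucket_mem t ht))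
  -- total value
  set T : ℕ := (Finset.Ioc 0 (k * n)).sum w with hT_def
  have hIcc : Finset.Icc 1 (k * n) = Finset.Ioc 0 (k * n) := Finset.Icc_add_one_left_eq_Ioc 0 (k * n)
  -- main counting bound
  have hmain := main_bound w n j k hj1 hjn hw2 hmono (k - 1) (by omega)
  have hk1 : k - 1 + 1 = k := by omega
  rw [hk1] at hmain
  have hTB : T ≤ 2 * (j - 1) + n * B := le_trans (Nat.le_add_right _ _) hmain
  have hdiv : T / n ≤ B := by
    rw [Nat.div_le_iff_le_mul_add_pred (by omega)]
    have : 2 * (j - 1) ≤ n - 1 := by omega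
    linarith
  -- bound the mms
  rw [hbucket, mms]
  apply Real.sSup_le
  · rintro x ⟨P, ⟨hdisj, hcover⟩, rfl⟩
    have hsub : ∀ l : Fin n, P l ⊆ Finset.Icc 1 (k * n) := by
      intro l
      rw [← hcover]
      exact Finset.subset_biUnion_of_mem P (Finset.mem_univ l)
    have hsum_nat : ∀ l : Fin n, (P l).sum (v i) = (((P l).sum w : ℕ) : ℝ) := by
      intro l
      rw [Nat.cast_sum]
      exact Finset.sum_congr rfl (fun m hm => hw m (hsub l hm))
    have hne : Nonempty (Fin n) := ⟨⟨0, hn⟩⟩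
    obtain ⟨l₀, hl₀⟩ := Finite.exists_min (fun l : Fin n => (P l).sum w)
    have htot : (Finset.univ : Finset (Fin n)).sum (fun l => (P l).sum w) = T := by
      rw [← Finset.sum_biUnion (by
        intro a _ b _ hab
        exact hdisj a b hab)]
      rw [hcover, hT_def, hIcc]
    have hmin : n * (P l₀).sum w ≤ T := by
      calc n * (P l₀).sum w = (Finset.univ : Finset (Fin n)).card • (P l₀).sum w := by
            rw [Finset.card_univ, Fintype.card_fin, smul_eq_mul]
        _ ≤ (Finset.univ : Finset (Fin n)).sum (fun l => (P l).sum w) :=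
            Finset.card_nsmul_le_sum _ _ _ (fun l _ => hl₀ l)
        _ = T := htot
    have hle_div : (P l₀).sum w ≤ T / n := by
      rw [Nat.le_div_iff_mul_le (by omega)]
      linarith
    calc (⨅ l : Fin n, (P l).sum (v i)) ≤ (P l₀).sum (v i) :=
          ciInf_le (Set.Finite.bddBelow (Set.finite_range _)) l₀
      _ = (((P l₀).sum w : ℕ) : ℝ) := hsum_nat l₀
      _ ≤ (B : ℝ) := by exact_mod_cast le_trans hle_div hdiv
  · exact Nat.cast_nonneg B
end
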